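/- Let Π be a polar space of rank n ≥ 3 of type C or of type D, 1 ≤ k ≤ n−2, B a base of Π and 𝓑 the associated base subset of G_k. For distinct S, U ∈ 𝓑 with dim(S ∩ U) = m (where dim ∅ = −1), one has c(S,U) ≤ (m+1)(2n−2k+m−2) + (k−m)². If moreover k = n−2, then c(S,U) ≤ (m+1)(m+2) + 1. -/

import Mathlib

/- Common framework: polar spaces of rank `n`, singular subspaces, projective
dimension, Grassmannians, bases and base subsets, inexact/complement subsets,
following Pankov, "Base subsets of polar Grassmannians". -/

namespace PolarGeo

variable {P : Type*}

/-- The (reflexive) collinearity relation determined by a family of lines. -/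
def Col (lines : Set (Set P)) (p q : P) : Prop :=
  p = q ∨ ∃ L ∈ lines, p ∈ L ∧ q ∈ L

/-- `S` is a subspace: it contains every line through two of its distinct
collinear points. -/
def IsSubspace (lines : Set (Set P)) (S : Set P) : Prop :=
  ∀ p ∈ S, ∀ q ∈ S, p ≠ q → ∀ L ∈ lines, p ∈ L → q ∈ L → L ⊆ S

/-- A singular subspace: a subspace whose points are mutually collinear. -/
def IsSingular (lines : Set (Set P)) (S : Set P) : Prop :=
  IsSubspace lines S ∧ ∀ p ∈ S, ∀ q ∈ S, Col lines p q

/-- A flag: a chain of nonempty singular subspaces. -/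
def IsFlag (lines : Set (Set P)) (C : Set (Set P)) : Prop :=
  IsChain (· ⊆ ·) C ∧ ∀ T ∈ C, IsSingular lines T ∧ T.Nonempty

/-- A polar space of rank `n` on the point set `P`: a partial linear space
such that every point is collinear with one or all points of every line, no
point is collinear with all others, and every maximal flag of singular
subspaces consists of `n` elements. -/
structure PolarSpace (P : Type*) (n : ℕ) where
  lines : Set (Set P)
  line_proper : ∀ L ∈ lines, L ≠ (Set.univ : Set P)
  line_two : ∀ L ∈ lines, ∃ p ∈ L, ∃ q ∈ L, p ≠ q
  point_on_line : ∀ p : P, ∃ L ∈ lines, p ∈ L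
  unique_line : ∀ p q : P, p ≠ q → ∀ L₁ ∈ lines, ∀ L₂ ∈ lines,
    p ∈ L₁ → q ∈ L₁ → p ∈ L₂ → q ∈ L₂ → L₁ = L₂
  one_or_all : ∀ p : P, ∀ L ∈ lines,
    (∃! q, q ∈ L ∧ Col lines p q) ∨ ∀ q ∈ L, Col lines p q
  no_center : ∀ p : P, ∃ q : P, ¬ Col lines p q
  flag_card : ∀ C : Set (Set P), IsFlag lines C →
    (∀ C', IsFlag lines C' → C ⊆ C' → C = C') → C.ncard = n

/-- A flag all of whose members are contained in `S`. -/
def IsFlagIn (lines : Set (Set P)) (S : Set P) (C : Set (Set P)) : Prop :=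
  IsFlag lines C ∧ ∀ T ∈ C, T ⊆ S

/-- `S` is a singular subspace of projective dimension `m` (so `dim ∅ = -1`):
a maximal chain of nonempty singular subspaces contained in `S` has `m + 1`
members. -/
def HasDim (lines : Set (Set P)) (S : Set P) (m : ℤ) : Prop :=
  IsSingular lines S ∧ ∃ C : Set (Set P), IsFlagIn lines S C ∧
    (∀ C', IsFlagIn lines S C' → C ⊆ C' → C = C') ∧
    C.Finite ∧ (C.ncard : ℤ) = m + 1

/-- The Grassmannian `G_m` of `m`-dimensional singular subspaces. -/
def Gdim (lines : Set (Set P)) (m : ℤ) : Set (Set P) := {S | HasDim lines S m}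

/-- The span of `X`: the smallest subspace containing `X`. -/
def span (lines : Set (Set P)) (X : Set P) : Set P :=
  ⋂₀ {S : Set P | IsSubspace lines S ∧ X ⊆ S}

/-- `X ⊥`: the set of points collinear with every point of `X`. -/
def perp (lines : Set (Set P)) (X : Set P) : Set P :=
  {y | ∀ x ∈ X, Col lines x y}

/-- A base of the polar space: `2n` points each of which is non-collinear
with exactly one of them. -/
def IsBase (lines : Set (Set P)) {n : ℕ} (p : Fin (2 * n) → P) : Prop :=
  Function.Injective p ∧ ∀ i, ∃! j, ¬ Col lines (p i) (p j)

/-- The base subset of `G_k` associated with a base: all `k`-dimensional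
singular subspaces spanned by points of the base. -/
def baseSubset (lines : Set (Set P)) {n : ℕ} (p : Fin (2 * n) → P) (k : ℤ) :
    Set (Set P) :=
  {S | HasDim lines S k ∧ ∃ I : Set (Fin (2 * n)), S = span lines (p '' I)}

/-- `𝓑(+x)`: the elements of `𝓑` containing the point `x`. -/
def plus (𝓑 : Set (Set P)) (x : P) : Set (Set P) := {S ∈ 𝓑 | x ∈ S}

/-- `𝓑(-x)`: the elements of `𝓑` not containing the point `x`. -/
def minus (𝓑 : Set (Set P)) (x : P) : Set (Set P) := {S ∈ 𝓑 | x ∉ S}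

/-- `R ⊆ 𝓑` is inexact: some base subset of `G_k` different from `𝓑`
contains `R`. -/
def IsInexact (lines : Set (Set P)) (n : ℕ) (k : ℤ) (𝓑 R : Set (Set P)) : Prop :=
  R ⊆ 𝓑 ∧ ∃ p' : Fin (2 * n) → P, IsBase lines p' ∧
    R ⊆ baseSubset lines p' k ∧ baseSubset lines p' k ≠ 𝓑

/-- `R ⊆ 𝓑` is exact: `𝓑` is the only base subset of `G_k` containing `R`. -/
def IsExact (lines : Set (Set P)) (n : ℕ) (k : ℤ) (𝓑 R : Set (Set P)) : Prop :=
  R ⊆ 𝓑 ∧ ∀ p' : Fin (2 * n) → P, IsBase lines p' →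
    R ⊆ baseSubset lines p' k → baseSubset lines p' k = 𝓑

/-- A maximal inexact subset of `𝓑`. -/
def IsMaxInexact (lines : Set (Set P)) (n : ℕ) (k : ℤ) (𝓑 R : Set (Set P)) : Prop :=
  IsInexact lines n k 𝓑 R ∧ ∀ R', IsInexact lines n k 𝓑 R' → R ⊆ R' → R = R'

/-- A complement subset of `𝓑`: the complement of a maximal inexact subset. -/
def IsComplement (lines : Set (Set P)) (n : ℕ) (k : ℤ) (𝓑 R : Set (Set P)) : Prop :=
  R ⊆ 𝓑 ∧ IsMaxInexact lines n k 𝓑 (𝓑 \ R)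

/-- Type `C`: every `(n-2)`-dimensional singular subspace is contained in at
least `3` maximal singular subspaces. -/
def TypeC (lines : Set (Set P)) (n : ℕ) : Prop :=
  ∀ S ∈ Gdim lines ((n : ℤ) - 2), ∃ M₁ ∈ Gdim lines ((n : ℤ) - 1),
    ∃ M₂ ∈ Gdim lines ((n : ℤ) - 1), ∃ M₃ ∈ Gdim lines ((n : ℤ) - 1),
      M₁ ≠ M₂ ∧ M₁ ≠ M₃ ∧ M₂ ≠ M₃ ∧ S ⊆ M₁ ∧ S ⊆ M₂ ∧ S ⊆ M₃

/-- Type `D`: every `(n-2)`-dimensional singular subspace is contained in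
exactly `2` maximal singular subspaces. -/
def TypeD (lines : Set (Set P)) (n : ℕ) : Prop :=
  ∀ S ∈ Gdim lines ((n : ℤ) - 2),
    {M | M ∈ Gdim lines ((n : ℤ) - 1) ∧ S ⊆ M}.ncard = 2

/-- A collineation of a point-line geometry on the whole type: a bijection
preserving the family of lines in both directions. -/
def IsCollineation (lines : Set (Set P)) (f : P → P) : Prop :=
  Function.Bijective f ∧ ∀ L : Set P, L ∈ lines ↔ f '' L ∈ lines

/-- A collineation of a partial linear space whose point set is the subset
`pts` of `X`: a bijection of `pts` mapping the family of lines onto itself in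
both directions. -/
def IsCollineationOn {X : Type*} (pts : Set X) (lns : Set (Set X)) (f : X → X) : Prop :=
  Set.BijOn f pts pts ∧ (∀ ℓ ∈ lns, f '' ℓ ∈ lns) ∧
    (∀ ℓ ∈ lns, ∃ ℓ' ∈ lns, f '' ℓ' = ℓ)

/-- Lines of the Grassmann space `𝔊_k`. For `k ≤ n - 2` a line is given by
incident `S ∈ G_{k-1}`, `U ∈ G_{k+1}` (for `k = 0` this is the shadow of an
element of `G_1`); for `k = n - 1` a line is given by an element of
`G_{n-2}`. -/
def grassLines (lines : Set (Set P)) (n k : ℕ) : Set (Set (Set P)) :=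
  if k = n - 1 then
    {ℓ | ∃ S ∈ Gdim lines ((n : ℤ) - 2),
      ℓ = {T | T ∈ Gdim lines ((n : ℤ) - 1) ∧ S ⊆ T}}
  else
    {ℓ | ∃ S ∈ Gdim lines ((k : ℤ) - 1), ∃ U ∈ Gdim lines ((k : ℤ) + 1),
      S ⊆ U ∧ ℓ = {T | T ∈ Gdim lines (k : ℤ) ∧ S ⊆ T ∧ T ⊆ U}}

/-- Collinearity of distinct points of `𝔊_k` for `k ≤ n - 2`: `S ⊥ U` and
the span of `S ∪ U` is `(k+1)`-dimensional. -/
def GColl (lines : Set (Set P)) (k : ℤ) (S U : Set P) : Prop :=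
  S ≠ U ∧ (∀ a ∈ S, ∀ b ∈ U, Col lines a b) ∧
    span lines (S ∪ U) ∈ Gdim lines (k + 1)

/-- Weak adjacency in `G_k`: the intersection is `(k-1)`-dimensional. -/
def WeakAdj (lines : Set (Set P)) (k : ℤ) (S U : Set P) : Prop :=
  S ∩ U ∈ Gdim lines (k - 1)

/-- The complement subset `C_{ij} = 𝓑(+i,-j) ∪ 𝓑(+σ(j),-σ(i))` of second
type. -/
def Cij (lines : Set (Set P)) {n : ℕ} (p : Fin (2 * n) → P)
    (σ : Fin (2 * n) → Fin (2 * n)) (k : ℤ) (i j : Fin (2 * n)) : Set (Set P) :=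
  (plus (baseSubset lines p k) (p i) ∩ minus (baseSubset lines p k) (p j)) ∪
  (plus (baseSubset lines p k) (p (σ j)) ∩ minus (baseSubset lines p k) (p (σ i)))

/-- The inexact subset
`R_{ij} = 𝓑(+i,+j) ∪ 𝓑(+σ(i),+σ(j)) ∪ 𝓑(-i,-σ(j))` of second type. -/
def Rij (lines : Set (Set P)) {n : ℕ} (p : Fin (2 * n) → P)
    (σ : Fin (2 * n) → Fin (2 * n)) (k : ℤ) (i j : Fin (2 * n)) : Set (Set P) :=
  (plus (baseSubset lines p k) (p i) ∩ plus (baseSubset lines p k) (p j)) ∪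
  (plus (baseSubset lines p k) (p (σ i)) ∩ plus (baseSubset lines p k) (p (σ j))) ∪
  (minus (baseSubset lines p k) (p i) ∩ minus (baseSubset lines p k) (p (σ j)))

/-- `c(S,U)`: the number of complement subsets of second type of the base
subset containing both `S` and `U`. -/
noncomputable def cCount (lines : Set (Set P)) {n : ℕ} (p : Fin (2 * n) → P)
    (σ : Fin (2 * n) → Fin (2 * n)) (k : ℤ) (S U : Set P) : ℕ :=
  {R : Set (Set P) | (∃ i j, j ≠ i ∧ j ≠ σ i ∧ R = Cij lines p σ k i j) ∧
    S ∈ R ∧ U ∈ R}.ncard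

/-- `O_+`, `O_-` form the half-spin partition of `G_{n-1}`: two maximal
singular subspaces lie in the same class iff `n - dim (S ∩ U)` is odd. -/
def IsHalfSpinPair (lines : Set (Set P)) (n : ℕ) (Opos Oneg : Set (Set P)) : Prop :=
  Opos.Nonempty ∧ Oneg.Nonempty ∧ Disjoint Opos Oneg ∧
  Opos ∪ Oneg = Gdim lines ((n : ℤ) - 1) ∧
  ∀ S ∈ Gdim lines ((n : ℤ) - 1), ∀ U ∈ Gdim lines ((n : ℤ) - 1),
    ((S ∈ Opos ↔ U ∈ Opos) ↔ ∃ m : ℤ, HasDim lines (S ∩ U) m ∧ Odd ((n : ℤ) - m))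

/-- The base subset of `O_δ` associated with a base. -/
def baseSubsetO (lines : Set (Set P)) (n : ℕ) (Oδ : Set (Set P))
    (p : Fin (2 * n) → P) : Set (Set P) :=
  Oδ ∩ baseSubset lines p ((n : ℤ) - 1)

/-- `R ⊆ 𝓑` is inexact in `O_δ`: some base subset of `O_δ` different from
`𝓑` contains `R`. -/
def IsInexactO (lines : Set (Set P)) (n : ℕ) (Oδ : Set (Set P))
    (𝓑 R : Set (Set P)) : Prop :=
  R ⊆ 𝓑 ∧ ∃ p' : Fin (2 * n) → P, IsBase lines p' ∧
    R ⊆ baseSubsetO lines n Oδ p' ∧ baseSubsetO lines n Oδ p' ≠ 𝓑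

/-- A maximal inexact subset of a base subset `𝓑` of `O_δ`. -/
def IsMaxInexactO (lines : Set (Set P)) (n : ℕ) (Oδ : Set (Set P))
    (𝓑 R : Set (Set P)) : Prop :=
  IsInexactO lines n Oδ 𝓑 R ∧
    ∀ R', IsInexactO lines n Oδ 𝓑 R' → R ⊆ R' → R = R'

/-- A complement subset of a base subset `𝓑` of `O_δ`. -/
def IsComplementO (lines : Set (Set P)) (n : ℕ) (Oδ : Set (Set P))
    (𝓑 R : Set (Set P)) : Prop :=
  R ⊆ 𝓑 ∧ IsMaxInexactO lines n Oδ 𝓑 (𝓑 \ R)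

/-- Lines of the half-spin space `𝔒_δ`: sets of all elements of `O_δ`
containing a fixed `(n-3)`-dimensional singular subspace. -/
def halfSpinLines (lines : Set (Set P)) (n : ℕ) (Oδ : Set (Set P)) :
    Set (Set (Set P)) :=
  {ℓ | ∃ S ∈ Gdim lines ((n : ℤ) - 3), ℓ = {T | T ∈ Oδ ∧ S ⊆ T}}

end PolarGeo

namespace PolarGeoAux
open PolarGeo Set

variable {P : Type*}

lemma col_refl (lines : Set (Set P)) (x : P) : Col lines x x := Or.inl rfl

lemma col_symm {lines : Set (Set P)} {x y : P} (h : Col lines x y) : Col lines y x := by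
  rcases h with h | ⟨L, hL, h1, h2⟩
  · exact Or.inl h.symm
  · exact Or.inr ⟨L, hL, h2, h1⟩

/-- perp of a single point -/
def pperp (lines : Set (Set P)) (x : P) : Set P := {y | Col lines x y}

lemma isSubspace_inter {lines : Set (Set P)} {S T : Set P}
    (hS : IsSubspace lines S) (hT : IsSubspace lines T) : IsSubspace lines (S ∩ T) := by
  intro a ha b hb hab L hL haL hbL
  exact subset_inter (hS a ha.1 b hb.1 hab L hL haL hbL) (hT a ha.2 b hb.2 hab L hL haL hbL)

lemma isSubspace_span (lines : Set (Set P)) (X : Set P) : IsSubspace lines (span lines X) := by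
  intro a ha b hb hab L hL haL hbL z hz
  rw [span, Set.mem_sInter]
  intro T hT
  exact hT.1 a (Set.mem_sInter.mp ha T hT) b (Set.mem_sInter.mp hb T hT) hab L hL haL hbL hz

lemma subset_span (lines : Set (Set P)) (X : Set P) : X ⊆ span lines X := by
  intro x hx
  rw [span, Set.mem_sInter]
  exact fun T hT => hT.2 hx

lemma span_le {lines : Set (Set P)} {X T : Set P} (hT : IsSubspace lines T) (h : X ⊆ T) :
    span lines X ⊆ T := fun _x hx => Set.mem_sInter.mp hx T ⟨hT, h⟩

lemma span_mono {lines : Set (Set P)} {X Y : Set P} (h : X ⊆ Y) :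
    span lines X ⊆ span lines Y :=
  span_le (isSubspace_span lines Y) (h.trans (subset_span lines Y))

lemma isSubspace_empty (lines : Set (Set P)) : IsSubspace lines (∅ : Set P) := by
  intro a ha; exact absurd ha (Set.notMem_empty a)

lemma span_empty (lines : Set (Set P)) : span lines (∅ : Set P) = ∅ :=
  subset_antisymm (span_le (isSubspace_empty lines) (Set.empty_subset _)) (Set.empty_subset _)

lemma isSubspace_singleton (lines : Set (Set P)) (x : P) : IsSubspace lines ({x} : Set P) := by
  intro a ha b hb hab
  rw [Set.mem_singleton_iff] at ha hb
  exact absurd (ha.trans hb.symm) hab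

lemma span_singleton (lines : Set (Set P)) (x : P) : span lines ({x} : Set P) = {x} :=
  subset_antisymm (span_le (isSubspace_singleton lines x) subset_rfl) (subset_span _ _)

lemma isSingular_of_subset {lines : Set (Set P)} {S T : Set P} (hS : IsSingular lines S)
    (hT : IsSubspace lines T) (h : T ⊆ S) : IsSingular lines T :=
  ⟨hT, fun a ha b hb => hS.2 a (h ha) b (h hb)⟩

variable {n : ℕ} (Pol : PolarSpace P n)

lemma pperp_subspace (x : P) : IsSubspace Pol.lines (pperp Pol.lines x) := by
  intro a ha b hb hab L hL haL hbL z hz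
  rcases Pol.one_or_all x L hL with ⟨w, _, huniq⟩ | hall
  · exact absurd ((huniq a ⟨haL, ha⟩).trans (huniq b ⟨hbL, hb⟩).symm) hab
  · exact hall z hz

lemma isSingular_span (X : Set P) (hX : ∀ x ∈ X, ∀ y ∈ X, Col Pol.lines x y) :
    IsSingular Pol.lines (span Pol.lines X) := by
  have key : ∀ x ∈ X, span Pol.lines X ⊆ pperp Pol.lines x := fun x hx =>
    span_le (pperp_subspace Pol x) (fun y hy => hX x hx y hy)
  refine ⟨isSubspace_span _ X, fun a ha b hb => ?_⟩
  have : span Pol.lines X ⊆ pperp Pol.lines a :=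
    span_le (pperp_subspace Pol a) (fun y hy => col_symm (key y hy ha))
  exact this hb

end PolarGeoAux
namespace PolarGeoAux
open PolarGeo Set

variable {P : Type*} {n : ℕ} (Pol : PolarSpace P n)
variable (p : Fin (2 * n) → P) (σ : Fin (2 * n) → Fin (2 * n))

/-- transversal set of indices -/
def Tv (σ : Fin (2 * n) → Fin (2 * n)) (D : Finset (Fin (2 * n))) : Prop :=
  ∀ i ∈ D, σ i ∉ D

lemma Tv.subset {σ : Fin (2 * n) → Fin (2 * n)} {D E : Finset (Fin (2 * n))}
    (h : D ⊆ E) (hE : Tv σ E) : Tv σ D := fun i hi hsi => hE i (h hi) (h hsi)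

variable {Pl : PolarSpace P n}

lemma sigma_invol (hσ : ∀ i j, ¬ Col Pol.lines (p i) (p j) ↔ j = σ i) (i : Fin (2 * n)) : σ (σ i) = i := by
  have h1 : ¬ Col Pol.lines (p i) (p (σ i)) := (hσ i (σ i)).mpr rfl
  have h2 : ¬ Col Pol.lines (p (σ i)) (p i) := fun hc => h1 (col_symm hc)
  exact ((hσ (σ i) i).mp h2).symm

lemma sigma_ne (hσ : ∀ i j, ¬ Col Pol.lines (p i) (p j) ↔ j = σ i) (i : Fin (2 * n)) : σ i ≠ i := by
  intro h
  have h1 : ¬ Col Pol.lines (p i) (p i) := (hσ i i).mpr h.symm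
  exact h1 (col_refl _ _)

lemma sigma_inj (hσ : ∀ i j, ¬ Col Pol.lines (p i) (p j) ↔ j = σ i) : Function.Injective σ :=
  Function.LeftInverse.injective (g := σ) (sigma_invol Pol p σ hσ)

lemma col_p_iff (hσ : ∀ i j, ¬ Col Pol.lines (p i) (p j) ↔ j = σ i) (a b : Fin (2 * n)) : Col Pol.lines (p a) (p b) ↔ b ≠ σ a := by
  constructor
  · intro hc hb; exact ((hσ a b).mpr hb) hc
  · intro hb; by_contra hc; exact hb ((hσ a b).mp hc)


/-- span of base points indexed by a finset -/
def Wspan (D : Finset (Fin (2 * n))) : Set P := span Pol.lines (p '' ↑D)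

lemma Wspan_mono {D E : Finset (Fin (2 * n))} (h : D ⊆ E) :
    Wspan Pol p D ⊆ Wspan Pol p E :=
  span_mono (Set.image_mono (by exact_mod_cast h))

lemma mem_Wspan_of_mem {D : Finset (Fin (2 * n))} {i : Fin (2 * n)} (hi : i ∈ D) :
    p i ∈ Wspan Pol p D :=
  subset_span _ _ ⟨i, by exact_mod_cast hi, rfl⟩

lemma Wspan_empty : Wspan Pol p (∅ : Finset (Fin (2 * n))) = ∅ := by
  simp [Wspan, span_empty]

lemma Wspan_singular (hσ : ∀ i j, ¬ Col Pol.lines (p i) (p j) ↔ j = σ i) {D : Finset (Fin (2 * n))} (hD : Tv σ D) :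
    IsSingular Pol.lines (Wspan Pol p D) := by
  apply isSingular_span
  rintro x ⟨a, ha, rfl⟩ y ⟨b, hb, rfl⟩
  rw [col_p_iff Pol p σ hσ]
  intro hba
  exact hD a (by exact_mod_cast ha) (by rw [← hba]; exact_mod_cast hb)

lemma Wspan_subset_pperp {D : Finset (Fin (2 * n))} {x : P}
    (h : ∀ a ∈ D, Col Pol.lines x (p a)) : Wspan Pol p D ⊆ pperp Pol.lines x := by
  apply span_le (pperp_subspace Pol x)
  rintro y ⟨a, ha, rfl⟩
  exact h a (by exact_mod_cast ha)

lemma mem_Wspan_iff (hσ : ∀ i j, ¬ Col Pol.lines (p i) (p j) ↔ j = σ i) {D : Finset (Fin (2 * n))} (hD : Tv σ D) (j : Fin (2 * n)) :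
    p j ∈ Wspan Pol p D ↔ j ∈ D := by
  constructor
  · intro hj
    by_contra hjD
    by_cases hsj : σ j ∈ D
    · have h1 : p (σ j) ∈ Wspan Pol p D := mem_Wspan_of_mem Pol p hsj
      have h2 : Col Pol.lines (p j) (p (σ j)) :=
        (Wspan_singular Pol p σ hσ hD).2 _ hj _ h1
      exact ((hσ j (σ j)).mpr rfl) h2
    · have hsub : Wspan Pol p D ⊆ pperp Pol.lines (p (σ j)) := by
        apply Wspan_subset_pperp
        intro a ha
        rw [col_p_iff Pol p σ hσ]
        intro hasj
        rw [hasj, sigma_invol Pol p σ hσ] at ha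
        exact hjD ha
      have : Col Pol.lines (p (σ j)) (p j) := hsub hj
      exact ((hσ j (σ j)).mpr rfl) (col_symm this)
  · exact mem_Wspan_of_mem Pol p

lemma tv_disj_image (hσ : ∀ i j, ¬ Col Pol.lines (p i) (p j) ↔ j = σ i) {D : Finset (Fin (2 * n))} (hD : Tv σ D) :
    Disjoint D (D.image σ) := by
  rw [Finset.disjoint_left]
  rintro i hi hi'
  obtain ⟨a, ha, rfl⟩ := Finset.mem_image.mp hi'
  exact hD a ha hi

lemma tv_card_le (hσ : ∀ i j, ¬ Col Pol.lines (p i) (p j) ↔ j = σ i) {D : Finset (Fin (2 * n))} (hD : Tv σ D) : D.card ≤ n := by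
  have h1 : (D ∪ D.image σ).card = D.card + (D.image σ).card :=
    Finset.card_union_of_disjoint (tv_disj_image Pol p σ hσ hD)
  have h2 : (D.image σ).card = D.card :=
    Finset.card_image_of_injective _ (sigma_inj Pol p σ hσ)
  have h3 : (D ∪ D.image σ).card ≤ 2 * n := by
    simpa using Finset.card_le_univ (D ∪ D.image σ)
  omega

lemma tv_extend_aux (hσ : ∀ i j, ¬ Col Pol.lines (p i) (p j) ↔ j = σ i) : ∀ c : ℕ, ∀ D : Finset (Fin (2 * n)), Tv σ D → D.card + c = n →
    ∃ E, D ⊆ E ∧ Tv σ E ∧ E.card = n := by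
  intro c
  induction c with
  | zero => exact fun D hD hc => ⟨D, subset_rfl, hD, by omega⟩
  | succ c ih =>
    intro D hD hc
    have hcard : (D ∪ D.image σ).card < 2 * n := by
      have h1 : (D ∪ D.image σ).card = D.card + (D.image σ).card :=
        Finset.card_union_of_disjoint (tv_disj_image Pol p σ hσ hD)
      have h2 : (D.image σ).card = D.card :=
        Finset.card_image_of_injective _ (sigma_inj Pol p σ hσ)
      omega
    have : ((D ∪ D.image σ)ᶜ).Nonempty := by
      rw [← Finset.card_pos, Finset.card_compl]
      have := Fintype.card_fin (2 * n)
      omega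
    obtain ⟨j, hj⟩ := this
    rw [Finset.mem_compl, Finset.mem_union, not_or] at hj
    obtain ⟨hj1, hj2⟩ := hj
    have hsjD : σ j ∉ D := by
      intro h
      apply hj2
      exact Finset.mem_image.mpr ⟨σ j, h, sigma_invol Pol p σ hσ j⟩
    have hTv : Tv σ (insert j D) := by
      intro i hi
      rcases Finset.mem_insert.mp hi with rfl | hiD
      · rw [Finset.mem_insert, not_or]
        exact ⟨sigma_ne Pol p σ hσ i, hsjD⟩
      · rw [Finset.mem_insert, not_or]
        refine ⟨?_, hD i hiD⟩
        intro h
        exact hj2 (Finset.mem_image.mpr ⟨i, hiD, h⟩)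
    have hcard' : (insert j D).card + c = n := by
      rw [Finset.card_insert_of_notMem hj1]; omega
    obtain ⟨E, hE1, hE2, hE3⟩ := ih (insert j D) hTv hcard'
    exact ⟨E, (Finset.subset_insert j D).trans hE1, hE2, hE3⟩

lemma tv_extend (hσ : ∀ i j, ¬ Col Pol.lines (p i) (p j) ↔ j = σ i) {D : Finset (Fin (2 * n))} (hD : Tv σ D) :
    ∃ E, D ⊆ E ∧ Tv σ E ∧ E.card = n := by
  have := tv_card_le Pol p σ hσ hD
  exact tv_extend_aux Pol p σ hσ (n - D.card) D hD (by omega)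

end PolarGeoAux
namespace PolarGeoAux
open PolarGeo Set

variable {P : Type*} {n : ℕ} (Pol : PolarSpace P n)

lemma isFlag_sUnion {lines : Set (Set P)} {c : Set (Set (Set P))}
    (hchain : IsChain (· ⊆ ·) c) (h : ∀ C ∈ c, IsFlag lines C) : IsFlag lines (⋃₀ c) := by
  constructor
  · intro x hx y hy hxy
    obtain ⟨a, ha, hxa⟩ := hx
    obtain ⟨b, hb, hyb⟩ := hy
    by_cases hab : a = b
    · exact (h b hb).1 (hab ▸ hxa) hyb hxy
    · rcases hchain ha hb hab with hs | hs
      · exact (h b hb).1 (hs hxa) hyb hxy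
      · exact (h a ha).1 hxa (hs hyb) hxy
  · rintro T ⟨a, ha, hTa⟩
    exact (h a ha).2 T hTa

lemma exists_max_flag {F0 : Set (Set P)} (h : IsFlag Pol.lines F0) :
    ∃ M, F0 ⊆ M ∧ IsFlag Pol.lines M ∧ ∀ C', IsFlag Pol.lines C' → M ⊆ C' → M = C' := by
  have hz : ∀ c ⊆ {C | IsFlag Pol.lines C}, IsChain (· ⊆ ·) c → c.Nonempty →
      ∃ ub ∈ {C | IsFlag Pol.lines C}, ∀ s ∈ c, s ⊆ ub := by
    intro c hc hchain _
    exact ⟨⋃₀ c, isFlag_sUnion hchain (fun C hC => hc hC), fun s hs => subset_sUnion_of_mem hs⟩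
  obtain ⟨M, hM0, hMmax⟩ := zorn_subset_nonempty {C | IsFlag Pol.lines C} hz F0 h
  exact ⟨M, hM0, hMmax.1, fun C' hC' hMC' => subset_antisymm hMC' (hMmax.2 hC' hMC')⟩

lemma maxflagIn_ncard_eq (hn : 0 < n) {S₀ : Set P} (hsing : IsSingular Pol.lines S₀)
    (hne : S₀.Nonempty) {C1 C2 : Set (Set P)}
    (h1 : IsFlagIn Pol.lines S₀ C1) (h1m : ∀ C', IsFlagIn Pol.lines S₀ C' → C1 ⊆ C' → C1 = C')
    (h2 : IsFlagIn Pol.lines S₀ C2) (h2m : ∀ C', IsFlagIn Pol.lines S₀ C' → C2 ⊆ C' → C2 = C') :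
    C1.ncard = C2.ncard := by
  have topmem : ∀ C, IsFlagIn Pol.lines S₀ C →
      (∀ C', IsFlagIn Pol.lines S₀ C' → C ⊆ C' → C = C') → S₀ ∈ C := by
    intro C hC hCm
    have hflag : IsFlagIn Pol.lines S₀ (C ∪ {S₀}) := by
      refine ⟨⟨?_, ?_⟩, ?_⟩
      · intro x hx y hy hxy
        rcases hx with hx | hx
        · rcases hy with hy | hy
          · exact hC.1.1 hx hy hxy
          · rw [Set.mem_singleton_iff] at hy; subst hy; exact Or.inl (hC.2 x hx)
        · rw [Set.mem_singleton_iff] at hx; subst hx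
          rcases hy with hy | hy
          · exact Or.inr (hC.2 y hy)
          · rw [Set.mem_singleton_iff] at hy; subst hy; exact Or.inl subset_rfl
      · rintro T (hT | hT)
        · exact hC.1.2 T hT
        · rw [Set.mem_singleton_iff] at hT; subst hT; exact ⟨hsing, hne⟩
      · rintro T (hT | hT)
        · exact hC.2 T hT
        · rw [Set.mem_singleton_iff] at hT; subst hT; exact subset_rfl
    have heq := hCm _ hflag Set.subset_union_left
    rw [heq]; exact Or.inr rfl
  have hzorn : ∀ c ⊆ {c : Set (Set P) | IsChain (· ⊆ ·) c ∧
      ∀ T ∈ c, IsSingular Pol.lines T ∧ S₀ ⊂ T}, IsChain (· ⊆ ·) c →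
      ∃ ub ∈ {c : Set (Set P) | IsChain (· ⊆ ·) c ∧ ∀ T ∈ c, IsSingular Pol.lines T ∧ S₀ ⊂ T},
        ∀ s ∈ c, s ⊆ ub := by
    intro c hc hchain
    refine ⟨⋃₀ c, ⟨?_, ?_⟩, fun s hs => subset_sUnion_of_mem hs⟩
    · intro x hx y hy hxy
      obtain ⟨a, ha, hxa⟩ := hx; obtain ⟨b, hb, hyb⟩ := hy
      by_cases hab : a = b
      · exact (hc hb).1 (hab ▸ hxa) hyb hxy
      · rcases hchain ha hb hab with hs | hs
        · exact (hc hb).1 (hs hxa) hyb hxy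
        · exact (hc ha).1 hxa (hs hyb) hxy
    · rintro T ⟨a, ha, hTa⟩; exact (hc ha).2 T hTa
  obtain ⟨Dup, hDupmax⟩ := zorn_subset _ hzorn
  have hDupmem := hDupmax.1
  have hDupM := hDupmax.2
  have main : ∀ C, IsFlagIn Pol.lines S₀ C →
      (∀ C', IsFlagIn Pol.lines S₀ C' → C ⊆ C' → C = C') → C.ncard + Dup.ncard = n := by
    intro C hC hCm
    have hS₀C : S₀ ∈ C := topmem C hC hCm
    have hflag : IsFlag Pol.lines (C ∪ Dup) := by
      constructor
      · intro x hx y hy hxy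
        rcases hx with hx | hx
        · rcases hy with hy | hy
          · exact hC.1.1 hx hy hxy
          · exact Or.inl ((hC.2 x hx).trans (hDupmem.2 y hy).2.subset)
        · rcases hy with hy | hy
          · exact Or.inr ((hC.2 y hy).trans (hDupmem.2 x hx).2.subset)
          · exact hDupmem.1 hx hy hxy
      · rintro T (hT | hT)
        · exact hC.1.2 T hT
        · exact ⟨(hDupmem.2 T hT).1, hne.mono (hDupmem.2 T hT).2.subset⟩
    have hmax : ∀ C', IsFlag Pol.lines C' → (C ∪ Dup) ⊆ C' → (C ∪ Dup) = C' := by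
      intro C' hC' hsub
      apply subset_antisymm hsub
      intro T hT
      have hS₀C' : S₀ ∈ C' := hsub (Or.inl hS₀C)
      by_cases hTS : T = S₀
      · subst hTS; exact Or.inl hS₀C
      · rcases hC'.1 hT hS₀C' hTS with hle | hge
        · left
          have hflag2 : IsFlagIn Pol.lines S₀ (C ∪ {T}) := by
            refine ⟨⟨?_, ?_⟩, ?_⟩
            · intro x hx y hy hxy
              have hx' : x ∈ C' := by
                rcases hx with hx | hx
                · exact hsub (Or.inl hx)
                · rw [Set.mem_singleton_iff] at hx; subst hx; exact hT
              have hy' : y ∈ C' := by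
                rcases hy with hy | hy
                · exact hsub (Or.inl hy)
                · rw [Set.mem_singleton_iff] at hy; subst hy; exact hT
              exact hC'.1 hx' hy' hxy
            · rintro T' (hT' | hT')
              · exact hC.1.2 T' hT'
              · rw [Set.mem_singleton_iff] at hT'; subst hT'; exact hC'.2 _ hT
            · rintro T' (hT' | hT')
              · exact hC.2 T' hT'
              · rw [Set.mem_singleton_iff] at hT'; subst hT'; exact hle
          have heq := hCm _ hflag2 Set.subset_union_left
          rw [heq]; exact Or.inr rfl
        · right
          have hmem : (Dup ∪ {T}) ∈ {c : Set (Set P) |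
              IsChain (· ⊆ ·) c ∧ ∀ T ∈ c, IsSingular Pol.lines T ∧ S₀ ⊂ T} := by
            constructor
            · intro x hx y hy hxy
              have hx' : x ∈ C' := by
                rcases hx with hx | hx
                · exact hsub (Or.inr hx)
                · rw [Set.mem_singleton_iff] at hx; subst hx; exact hT
              have hy' : y ∈ C' := by
                rcases hy with hy | hy
                · exact hsub (Or.inr hy)
                · rw [Set.mem_singleton_iff] at hy; subst hy; exact hT
              exact hC'.1 hx' hy' hxy
            · rintro T' (hT' | hT')
              · exact hDupmem.2 T' hT'
              · rw [Set.mem_singleton_iff] at hT'; subst hT'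
                exact ⟨(hC'.2 _ hT).1, HasSubset.Subset.ssubset_of_ne hge (Ne.symm hTS)⟩
          exact hDupM hmem Set.subset_union_left (Or.inr rfl)
    have hcard := Pol.flag_card _ hflag hmax
    have hfin : (C ∪ Dup).Finite := by
      by_contra hinf
      have h0 : (C ∪ Dup).ncard = 0 := Set.Infinite.ncard hinf
      omega
    have hdisj : Disjoint C Dup := by
      rw [Set.disjoint_left]
      intro T hTC hTD
      exact (hDupmem.2 T hTD).2.not_subset (hC.2 T hTC)
    rw [Set.ncard_union_eq hdisj (hfin.subset Set.subset_union_left)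
      (hfin.subset Set.subset_union_right)] at hcard
    exact hcard
  have e1 := main C1 h1 h1m
  have e2 := main C2 h2 h2m
  omega

end PolarGeoAux
namespace PolarGeoAux
open PolarGeo Set

section listhelp
variable {α : Type*} [DecidableEq α]

lemma toFinset_take_subset (L : List α) {l l' : ℕ} (h : l ≤ l') :
    (L.take l).toFinset ⊆ (L.take l').toFinset := by
  intro x hx
  rw [List.mem_toFinset] at *
  have he : L.take l = (L.take l').take l := by rw [List.take_take, min_eq_left h]
  rw [he] at hx
  exact List.take_subset _ _ hx

lemma toFinset_take_subset_toFinset (L : List α) (l : ℕ) :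
    (L.take l).toFinset ⊆ L.toFinset := by
  intro x hx
  rw [List.mem_toFinset] at *
  exact List.take_subset _ _ hx

lemma getElem_mem_take_succ (L : List α) {l : ℕ} (hl : l < L.length) :
    L[l] ∈ (L.take (l + 1)).toFinset := by
  rw [List.mem_toFinset]
  have hlen : l < (L.take (l + 1)).length := by
    rw [List.length_take]; omega
  have : (L.take (l + 1))[l] = L[l] := List.getElem_take
  rw [← this]
  exact List.getElem_mem hlen

lemma getElem_not_mem_take (L : List α) (hnd : L.Nodup) {l : ℕ} (hl : l < L.length) :
    L[l] ∉ (L.take l).toFinset := by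
  rw [List.mem_toFinset]
  intro hmem
  obtain ⟨j, hj, hje⟩ := List.mem_iff_getElem.mp hmem
  rw [List.length_take] at hj
  have hj2 : j < L.length := by omega
  have : (L.take l)[j] = L[j] := List.getElem_take
  rw [this] at hje
  have := (List.Nodup.getElem_inj_iff hnd).mp hje
  omega

lemma take_succ_toFinset (L : List α) {l : ℕ} (hl : l < L.length) :
    (L.take (l + 1)).toFinset = insert L[l] (L.take l).toFinset := by
  have h1 : L.take (l + 1) = L.take l ++ L[l]?.toList := List.take_succ
  rw [h1, List.toFinset_append]
  have h2 : L[l]? = some L[l] := List.getElem?_eq_getElem hl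
  rw [h2]
  ext a
  simp [or_comm]

end listhelp

variable {P : Type*} {n : ℕ} (Pol : PolarSpace P n)
variable (p : Fin (2 * n) → P) (σ : Fin (2 * n) → Fin (2 * n))

lemma covering (hσ : ∀ i j, ¬ Col Pol.lines (p i) (p j) ↔ j = σ i)
    {D : Finset (Fin (2 * n))} (hD : Tv σ D) {i : Fin (2 * n)} (hi : i ∈ D)
    {T : Set P} (hTsing : IsSingular Pol.lines T)
    (hsub1 : Wspan Pol p (D.erase i) ⊆ T) (hsub2 : T ⊆ Wspan Pol p D) :
    T = Wspan Pol p (D.erase i) ∨ T = Wspan Pol p D := by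
  classical
  by_contra hcon
  push_neg at hcon
  obtain ⟨hc1, hc2⟩ := hcon
  have hn : 0 < n := by have := i.pos; omega
  obtain ⟨E, hDE, hE, hEcard⟩ := tv_extend Pol p σ hσ hD
  set L : List (Fin (2 * n)) := (D.erase i).toList ++ i :: (E \ D).toList with hL
  set d1 : ℕ := (D.erase i).card with hd1
  have hd1len : ((D.erase i).toList).length = d1 := Finset.length_toList _
  have hLlen : L.length = n := by
    have h1 : ((E \ D).toList).length = (E \ D).card := Finset.length_toList _
    have h2 : (E \ D).card + D.card = E.card := Finset.card_sdiff_add_card_eq_card hDE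
    have h3 : d1 + 1 = D.card := Finset.card_erase_add_one hi
    simp only [hL, List.length_append, List.length_cons, hd1len, h1]
    omega
  have hnodup : L.Nodup := by
    rw [List.nodup_append]
    refine ⟨Finset.nodup_toList _, ?_, ?_⟩
    · rw [List.nodup_cons]
      refine ⟨?_, Finset.nodup_toList _⟩
      rw [Finset.mem_toList]
      simp [hi]
    · intro a ha b hb rfl
      rw [Finset.mem_toList] at ha
      rcases List.mem_cons.mp hb with rfl | hb2
      · exact (Finset.notMem_erase a D) ha
      · rw [Finset.mem_toList, Finset.mem_sdiff] at hb2
        exact hb2.2 (Finset.mem_of_mem_erase ha)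
  have htake_d1 : (L.take d1).toFinset = D.erase i := by
    rw [hL, List.take_left' hd1len, Finset.toList_toFinset]
  have htake_d : (L.take (d1 + 1)).toFinset = D := by
    have h1 : L.take (d1 + 1) = (D.erase i).toList ++ [i] := by
      rw [hL]
      rw [show d1 + 1 = ((D.erase i).toList).length + 1 by rw [hd1len]]
      rw [List.take_append]
      simp
    rw [h1, List.toFinset_append, Finset.toList_toFinset]
    ext a
    simp only [Finset.mem_union, List.toFinset_cons, List.toFinset_nil, insert_empty_eq,
      Finset.mem_singleton, Finset.mem_erase]
    constructor
    · rintro (⟨_, h⟩ | rfl)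
      · exact h
      · exact hi
    · intro h
      by_cases hai : a = i
      · exact Or.inr hai
      · exact Or.inl ⟨hai, h⟩
  have htoFinL : L.toFinset = E := by
    ext x
    rw [hL, List.toFinset_append]
    simp only [Finset.mem_union, List.mem_toFinset, List.mem_cons, Finset.mem_toList,
      Finset.mem_erase, Finset.mem_sdiff]
    constructor
    · rintro (⟨_, hx⟩ | rfl | ⟨hx, _⟩)
      · exact hDE hx
      · exact hDE hi
      · exact hx
    · intro hx
      by_cases hxD : x ∈ D
      · by_cases hxi : x = i
        · exact Or.inr (Or.inl hxi)
        · exact Or.inl ⟨hxi, hxD⟩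
      · exact Or.inr (Or.inr ⟨hx, hxD⟩)
  have hTvtake : ∀ l, Tv σ (L.take l).toFinset := by
    intro l
    apply Tv.subset _ hE
    rw [← htoFinL]
    exact toFinset_take_subset_toFinset L l
  set Vl : ℕ → Set P := fun l => Wspan Pol p (L.take l).toFinset with hVl
  have hVmono : ∀ {l l'}, l ≤ l' → Vl l ⊆ Vl l' := fun h =>
    Wspan_mono Pol p (toFinset_take_subset L h)
  have hVnotmem : ∀ l (hlL : l < L.length), p (L[l]) ∉ Vl l := by
    intro l hlL
    rw [hVl]
    rw [mem_Wspan_iff Pol p σ hσ (hTvtake l)]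
    exact getElem_not_mem_take L hnodup hlL
  have hVmem : ∀ l (hlL : l < L.length), p (L[l]) ∈ Vl (l + 1) :=
    fun l hlL => mem_Wspan_of_mem Pol p (getElem_mem_take_succ L hlL)
  have hVd1 : Vl d1 = Wspan Pol p (D.erase i) := by rw [hVl]; simp only [htake_d1]
  have hVd : Vl (d1 + 1) = Wspan Pol p D := by rw [hVl]; simp only [htake_d]
  have hd1n : d1 + 1 ≤ n := by
    have h3 : d1 + 1 = D.card := Finset.card_erase_add_one hi
    have := tv_card_le Pol p σ hσ hD
    omega
  -- T is nonempty
  have hTne : T.Nonempty := by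
    rcases Set.eq_empty_or_nonempty T with rfl | h
    · exfalso
      apply hc1
      have : Wspan Pol p (D.erase i) = ∅ := Set.eq_empty_of_subset_empty hsub1
      rw [this]
    · exact h
  -- the flag
  set 𝔽 : Finset (Set P) := (Finset.Icc 1 n).image Vl with h𝔽
  have hstrict : ∀ l l', l < l' → l' ≤ n → Vl l ⊂ Vl l' := by
    intro l l' hll hl'n
    refine ⟨hVmono (le_of_lt hll), fun hsupset => ?_⟩
    have hlL : l < L.length := by rw [hLlen]; omega
    have h1 := hVmem l hlL
    have h2 := hVnotmem l hlL
    exact h2 (hsupset (hVmono (by omega : l + 1 ≤ l') h1))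
  have hinj : Set.InjOn Vl ↑(Finset.Icc 1 n) := by
    intro a ha b hb hab
    simp only [Finset.coe_Icc, Set.mem_Icc] at ha hb
    by_contra hne
    rcases lt_or_gt_of_ne hne with h | h
    · exact (hstrict a b h hb.2).2 (le_of_eq hab.symm)
    · exact (hstrict b a h ha.2).2 (le_of_eq hab)
  have h𝔽card : 𝔽.card = n := by
    rw [h𝔽, Finset.card_image_of_injOn hinj, Nat.card_Icc]; omega
  have hT𝔽 : T ∉ 𝔽 := by
    rw [h𝔽]
    intro hmem
    obtain ⟨l, hl, hVlT⟩ := Finset.mem_image.mp hmem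
    rw [Finset.mem_Icc] at hl
    by_cases hld : l ≤ d1
    · apply hc1
      apply subset_antisymm
      · rw [← hVlT, ← hVd1]; exact hVmono hld
      · exact hsub1
    · apply hc2
      apply subset_antisymm hsub2
      rw [← hVlT, ← hVd]
      exact hVmono (by omega)
  set 𝔉 : Set (Set P) := insert T ↑𝔽 with h𝔉
  have h𝔉card : 𝔉.ncard = n + 1 := by
    rw [h𝔉, Set.ncard_insert_of_notMem (by simpa using hT𝔽) (Finset.finite_toSet 𝔽)]
    rw [Set.ncard_coe_finset, h𝔽card]
  have hsingVl : ∀ l, IsSingular Pol.lines (Vl l) :=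
    fun l => Wspan_singular Pol p σ hσ (hTvtake l)
  have hVlne : ∀ l, 1 ≤ l → l ≤ n → (Vl l).Nonempty := by
    intro l h1 h2
    have h0L : 0 < L.length := by rw [hLlen]; omega
    exact ⟨p (L[0]), hVmono h1 (hVmem 0 h0L)⟩
  have hcmpT : ∀ l, 1 ≤ l → l ≤ n → Vl l ⊆ T ∨ T ⊆ Vl l := by
    intro l h1 h2
    by_cases hld : l ≤ d1
    · exact Or.inl ((hVmono hld).trans (hVd1 ▸ hsub1))
    · refine Or.inr (hsub2.trans ?_)
      rw [← hVd]
      exact hVmono (by omega)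
  have hmem𝔽 : ∀ {x : Set P}, x ∈ (↑𝔽 : Set (Set P)) → ∃ l, (1 ≤ l ∧ l ≤ n) ∧ Vl l = x := by
    intro x hx
    rw [h𝔽] at hx
    obtain ⟨l, hl, hV⟩ := Finset.mem_image.mp (Finset.mem_coe.mp hx)
    rw [Finset.mem_Icc] at hl
    exact ⟨l, hl, hV⟩
  have hflag : IsFlag Pol.lines 𝔉 := by
    constructor
    · rintro x hx y hy hxy
      rw [h𝔉] at hx hy
      rcases hx with rfl | hx
      · rcases hy with rfl | hy
        · exact absurd rfl hxy
        · obtain ⟨l, hl, rfl⟩ := hmem𝔽 hy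
          exact (hcmpT l hl.1 hl.2).symm.imp id id
      · rcases hy with rfl | hy
        · obtain ⟨l, hl, rfl⟩ := hmem𝔽 hx
          exact hcmpT l hl.1 hl.2
        · obtain ⟨l, hl, rfl⟩ := hmem𝔽 hx
          obtain ⟨l', hl', rfl⟩ := hmem𝔽 hy
          rcases le_total l l' with h | h
          · exact Or.inl (hVmono h)
          · exact Or.inr (hVmono h)
    · rintro T' hT'
      rw [h𝔉] at hT'
      rcases hT' with rfl | hT'
      · exact ⟨hTsing, hTne⟩
      · obtain ⟨l, hl, rfl⟩ := hmem𝔽 hT'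
        exact ⟨hsingVl l, hVlne l hl.1 hl.2⟩
  obtain ⟨M, hM1, hM2, hM3⟩ := exists_max_flag Pol hflag
  have hMcard : M.ncard = n := Pol.flag_card M hM2 hM3
  by_cases hMfin : M.Finite
  · have := Set.ncard_le_ncard hM1 hMfin
    omega
  · have h0 : M.ncard = 0 := Set.Infinite.ncard hMfin
    omega

end PolarGeoAux
namespace PolarGeoAux
open PolarGeo Set

variable {P : Type*} {n : ℕ} (Pol : PolarSpace P n)
variable (p : Fin (2 * n) → P) (σ : Fin (2 * n) → Fin (2 * n))

lemma baseFlag (hσ : ∀ i j, ¬ Col Pol.lines (p i) (p j) ↔ j = σ i)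
    {D : Finset (Fin (2 * n))} (hD : Tv σ D) (hne : D.Nonempty) :
    ∃ F : Set (Set P), IsFlagIn Pol.lines (Wspan Pol p D) F ∧
      (∀ C', IsFlagIn Pol.lines (Wspan Pol p D) C' → F ⊆ C' → F = C') ∧ F.ncard = D.card := by
  classical
  set L : List (Fin (2 * n)) := D.toList with hL
  set d : ℕ := D.card with hd
  have hdpos : 1 ≤ d := Finset.card_pos.mpr hne
  have hLlen : L.length = d := Finset.length_toList _
  have hnodup : L.Nodup := Finset.nodup_toList _
  have htoF : L.toFinset = D := Finset.toList_toFinset D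
  have htakeTv : ∀ l, Tv σ (L.take l).toFinset := by
    intro l
    apply Tv.subset _ hD
    rw [← htoF]
    exact toFinset_take_subset_toFinset L l
  have htaked : (L.take d).toFinset = D := by
    rw [← hLlen, List.take_length, htoF]
  set Vl : ℕ → Set P := fun l => Wspan Pol p (L.take l).toFinset with hVl
  have hVmono : ∀ {l l'}, l ≤ l' → Vl l ⊆ Vl l' := fun h =>
    Wspan_mono Pol p (toFinset_take_subset L h)
  have hVnotmem : ∀ l (hlL : l < L.length), p (L[l]) ∉ Vl l := by
    intro l hlL
    rw [hVl]
    rw [mem_Wspan_iff Pol p σ hσ (htakeTv l)]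
    exact getElem_not_mem_take L hnodup hlL
  have hVmem : ∀ l (hlL : l < L.length), p (L[l]) ∈ Vl (l + 1) :=
    fun l hlL => mem_Wspan_of_mem Pol p (getElem_mem_take_succ L hlL)
  have hVd : Vl d = Wspan Pol p D := by rw [hVl]; simp only [htaked]
  have hV0 : Vl 0 = ∅ := by
    rw [hVl]; simp only [List.take_zero, List.toFinset_nil]; exact Wspan_empty Pol p
  have hstrict : ∀ l l', l < l' → l' ≤ d → Vl l ⊂ Vl l' := by
    intro l l' hll hl'n
    refine ⟨hVmono (le_of_lt hll), fun hsupset => ?_⟩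
    have hlL : l < L.length := by rw [hLlen]; omega
    have h1 := hVmem l hlL
    have h2 := hVnotmem l hlL
    exact h2 (hsupset (hVmono (by omega : l + 1 ≤ l') h1))
  have hinj : Set.InjOn Vl ↑(Finset.Icc 1 d) := by
    intro a ha b hb hab
    simp only [Finset.coe_Icc, Set.mem_Icc] at ha hb
    by_contra hne'
    rcases lt_or_gt_of_ne hne' with h | h
    · exact (hstrict a b h hb.2).2 (le_of_eq hab.symm)
    · exact (hstrict b a h ha.2).2 (le_of_eq hab)
  set 𝔽 : Finset (Set P) := (Finset.Icc 1 d).image Vl with h𝔽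
  have hmem𝔽 : ∀ {x : Set P}, x ∈ (↑𝔽 : Set (Set P)) → ∃ l, (1 ≤ l ∧ l ≤ d) ∧ Vl l = x := by
    intro x hx
    rw [h𝔽] at hx
    obtain ⟨l, hl, hV⟩ := Finset.mem_image.mp (Finset.mem_coe.mp hx)
    rw [Finset.mem_Icc] at hl
    exact ⟨l, hl, hV⟩
  have hmem𝔽' : ∀ l, 1 ≤ l → l ≤ d → Vl l ∈ (↑𝔽 : Set (Set P)) := by
    intro l h1 h2
    rw [h𝔽]
    exact Finset.mem_coe.mpr (Finset.mem_image.mpr ⟨l, Finset.mem_Icc.mpr ⟨h1, h2⟩, rfl⟩)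
  have hVlne : ∀ l, 1 ≤ l → l ≤ d → (Vl l).Nonempty := by
    intro l h1 h2
    have h0L : 0 < L.length := by rw [hLlen]; omega
    exact ⟨p (L[0]), hVmono h1 (hVmem 0 h0L)⟩
  have hsingVl : ∀ l, IsSingular Pol.lines (Vl l) :=
    fun l => Wspan_singular Pol p σ hσ (htakeTv l)
  refine ⟨↑𝔽, ⟨⟨?_, ?_⟩, ?_⟩, ?_, ?_⟩
  · -- chain
    intro x hx y hy hxy
    obtain ⟨l, hl, rfl⟩ := hmem𝔽 hx
    obtain ⟨l', hl', rfl⟩ := hmem𝔽 hy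
    rcases le_total l l' with h | h
    · exact Or.inl (hVmono h)
    · exact Or.inr (hVmono h)
  · -- members
    intro T hT
    obtain ⟨l, hl, rfl⟩ := hmem𝔽 hT
    exact ⟨hsingVl l, hVlne l hl.1 hl.2⟩
  · -- contained in Wspan D
    intro T hT
    obtain ⟨l, hl, rfl⟩ := hmem𝔽 hT
    rw [← hVd]
    exact hVmono hl.2
  · -- maximality
    intro C' hC' hFC'
    apply subset_antisymm hFC'
    intro T hT
    have hTsing : IsSingular Pol.lines T := (hC'.1.2 T hT).1
    have hTne : T.Nonempty := (hC'.1.2 T hT).2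
    have hTsub : T ⊆ Wspan Pol p D := hC'.2 T hT
    set KK : Finset ℕ := (Finset.range (d + 1)).filter (fun l => Vl l ⊆ T) with hKK
    have h0K : 0 ∈ KK := by
      rw [hKK, Finset.mem_filter]
      exact ⟨Finset.mem_range.mpr (by omega), by rw [hV0]; exact Set.empty_subset T⟩
    set lstar : ℕ := KK.max' ⟨0, h0K⟩ with hlstar
    have hlstarK : lstar ∈ KK := Finset.max'_mem _ _
    rw [hKK, Finset.mem_filter, Finset.mem_range] at hlstarK
    obtain ⟨hlstard, hlstarsub⟩ := hlstarK
    by_cases hld : lstar = d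
    · have : T = Vl d := by
        apply subset_antisymm
        · rw [hVd]; exact hTsub
        · rw [← hld]; exact hlstarsub
      rw [this]
      exact hmem𝔽' d hdpos le_rfl
    · have hlstarlt : lstar < d := by omega
      have hnsub : ¬ Vl (lstar + 1) ⊆ T := by
        intro hsub
        have hmemK : lstar + 1 ∈ KK := by
          rw [hKK, Finset.mem_filter, Finset.mem_range]
          exact ⟨by omega, hsub⟩
        have := Finset.le_max' KK (lstar + 1) hmemK
        rw [← hlstar] at this
        omega
      have hVmemC' : Vl (lstar + 1) ∈ C' := hFC' (hmem𝔽' (lstar + 1) (by omega) (by omega))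
      have hTneV : T ≠ Vl (lstar + 1) := by
        intro h
        exact hnsub (h ▸ subset_rfl)
      have hTsubV : T ⊆ Vl (lstar + 1) := by
        rcases hC'.1.1 hT hVmemC' hTneV with h | h
        · exact h
        · exact absurd h hnsub
      -- covering
      have hlstarL : lstar < L.length := by rw [hLlen]; omega
      have hi' : L[lstar] ∈ (L.take (lstar + 1)).toFinset := getElem_mem_take_succ L hlstarL
      have herase : ((L.take (lstar + 1)).toFinset).erase (L[lstar]) = (L.take lstar).toFinset := by
        rw [take_succ_toFinset L hlstarL]
        exact Finset.erase_insert (getElem_not_mem_take L hnodup hlstarL)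
      have hcov := covering Pol p σ hσ (htakeTv (lstar + 1)) hi' hTsing
        (by rw [herase]; exact hlstarsub) hTsubV
      rw [herase] at hcov
      rcases hcov with h | h
      · have hlstar1 : 1 ≤ lstar := by
          by_contra h0
          have hl0 : lstar = 0 := by omega
          rw [hl0] at h
          have hTe : T = ∅ := by
            rw [h]
            simp only [List.take_zero, List.toFinset_nil]
            exact Wspan_empty Pol p
          exact hTne.ne_empty hTe
        rw [h]
        exact hmem𝔽' lstar hlstar1 (by omega)
      · exfalso
        exact hnsub (le_of_eq h.symm)
  · -- cardinality
    rw [Set.ncard_coe_finset, h𝔽, Finset.card_image_of_injOn hinj, Nat.card_Icc]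
    omega

lemma hasDim_card (hσ : ∀ i j, ¬ Col Pol.lines (p i) (p j) ↔ j = σ i)
    {D : Finset (Fin (2 * n))} (hD : Tv σ D) {m : ℤ}
    (h : HasDim Pol.lines (Wspan Pol p D) m) (hn : 0 < n) : (D.card : ℤ) = m + 1 := by
  obtain ⟨hsing, C, hC, hCmax, hCfin, hCcard⟩ := h
  rcases Finset.eq_empty_or_nonempty D with rfl | hne
  · have hCe : C = ∅ := by
      rw [Set.eq_empty_iff_forall_notMem]
      intro T hT
      have h1 := (hC.1.2 T hT).2
      have h2 := hC.2 T hT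
      rw [Wspan_empty] at h2
      exact h1.ne_empty (Set.eq_empty_of_subset_empty h2)
    rw [hCe, Set.ncard_empty] at hCcard
    simpa using hCcard
  · obtain ⟨F, hF, hFmax, hFcard⟩ := baseFlag Pol p σ hσ hD hne
    obtain ⟨i, hi⟩ := hne
    have hnemp : (Wspan Pol p D).Nonempty := ⟨p i, mem_Wspan_of_mem Pol p hi⟩
    have heq := maxflagIn_ncard_eq Pol hn (Wspan_singular Pol p σ hσ hD) hnemp hC hCmax hF hFmax
    rw [heq, hFcard] at hCcard
    exact hCcard

lemma W_inter_pperp (hσ : ∀ i j, ¬ Col Pol.lines (p i) (p j) ↔ j = σ i)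
    {D : Finset (Fin (2 * n))} (hD : Tv σ D) {i : Fin (2 * n)} (hi : i ∈ D) :
    Wspan Pol p D ∩ pperp Pol.lines (p (σ i)) = Wspan Pol p (D.erase i) := by
  have hsub1 : Wspan Pol p (D.erase i) ⊆ Wspan Pol p D :=
    Wspan_mono Pol p (Finset.erase_subset i D)
  have hsub2 : Wspan Pol p (D.erase i) ⊆ pperp Pol.lines (p (σ i)) := by
    apply Wspan_subset_pperp
    intro a ha
    rw [col_p_iff Pol p σ hσ, sigma_invol Pol p σ hσ]
    exact Finset.ne_of_mem_erase ha
  apply subset_antisymm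
  · have hVsub : IsSubspace Pol.lines (Wspan Pol p D ∩ pperp Pol.lines (p (σ i))) :=
      isSubspace_inter (isSubspace_span _ _) (pperp_subspace Pol _)
    have hVsing : IsSingular Pol.lines (Wspan Pol p D ∩ pperp Pol.lines (p (σ i))) :=
      isSingular_of_subset (Wspan_singular Pol p σ hσ hD) hVsub Set.inter_subset_left
    have hVsub1 : Wspan Pol p (D.erase i) ⊆ Wspan Pol p D ∩ pperp Pol.lines (p (σ i)) :=
      Set.subset_inter hsub1 hsub2
    rcases covering Pol p σ hσ hD hi hVsing hVsub1 Set.inter_subset_left with h | h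
    · exact le_of_eq h
    · exfalso
      have hpi : p i ∈ Wspan Pol p D ∩ pperp Pol.lines (p (σ i)) := by
        rw [h]; exact mem_Wspan_of_mem Pol p hi
      have : Col Pol.lines (p (σ i)) (p i) := hpi.2
      rw [col_p_iff Pol p σ hσ, sigma_invol Pol p σ hσ] at this
      exact this rfl
  · exact Set.subset_inter hsub1 hsub2

lemma Wspan_inter_subset_aux (hσ : ∀ i j, ¬ Col Pol.lines (p i) (p j) ↔ j = σ i) :
    ∀ c : ℕ, ∀ I J : Finset (Fin (2 * n)), (I \ J).card = c → Tv σ I → Tv σ J →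
    Wspan Pol p I ∩ Wspan Pol p J ⊆ Wspan Pol p (I ∩ J) := by
  intro c
  induction c with
  | zero =>
    intro I J hc hI hJ
    have hsub : I ⊆ J := by
      rw [← Finset.sdiff_eq_empty_iff_subset]
      exact Finset.card_eq_zero.mp hc
    rw [Finset.inter_eq_left.mpr hsub]
    exact Set.inter_subset_left
  | succ c ih =>
    intro I J hc hI hJ x hx
    have hne : (I \ J).Nonempty := by rw [← Finset.card_pos, hc]; omega
    obtain ⟨i, hiIJ⟩ := hne
    rw [Finset.mem_sdiff] at hiIJ
    have hxp : x ∈ pperp Pol.lines (p (σ i)) := by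
      apply Wspan_subset_pperp Pol p (D := J) ?_ hx.2
      intro a ha
      rw [col_p_iff Pol p σ hσ, sigma_invol Pol p σ hσ]
      intro h
      rw [h] at ha
      exact hiIJ.2 ha
    have hx1 : x ∈ Wspan Pol p (I.erase i) := by
      rw [← W_inter_pperp Pol p σ hσ hI hiIJ.1]
      exact ⟨hx.1, hxp⟩
    have hcards : ((I.erase i) \ J).card = c := by
      have he : (I.erase i) \ J = (I \ J).erase i := by
        ext a
        simp only [Finset.mem_sdiff, Finset.mem_erase]
        tauto
      rw [he, Finset.card_erase_of_mem (Finset.mem_sdiff.mpr hiIJ), hc]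
      omega
    have hrec := ih (I.erase i) J hcards (Tv.subset (Finset.erase_subset _ _) hI) hJ
      ⟨hx1, hx.2⟩
    have he2 : (I.erase i) ∩ J = I ∩ J := by
      ext a
      simp only [Finset.mem_inter, Finset.mem_erase]
      constructor
      · rintro ⟨⟨_, h1⟩, h2⟩; exact ⟨h1, h2⟩
      · rintro ⟨h1, h2⟩
        refine ⟨⟨?_, h1⟩, h2⟩
        rintro rfl
        exact hiIJ.2 h2
    rwa [he2] at hrec

lemma Wspan_inter (hσ : ∀ i j, ¬ Col Pol.lines (p i) (p j) ↔ j = σ i)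
    {I J : Finset (Fin (2 * n))} (hI : Tv σ I) (hJ : Tv σ J) :
    Wspan Pol p I ∩ Wspan Pol p J = Wspan Pol p (I ∩ J) :=
  subset_antisymm (Wspan_inter_subset_aux Pol p σ hσ _ I J rfl hI hJ)
    (Set.subset_inter (Wspan_mono Pol p Finset.inter_subset_left)
      (Wspan_mono Pol p Finset.inter_subset_right))

lemma key_geom (hn : 0 < n) (hσ : ∀ i j, ¬ Col Pol.lines (p i) (p j) ↔ j = σ i)
    {k : ℤ} {S : Set P} (hS : S ∈ baseSubset Pol.lines p k) :
    ∃ I : Finset (Fin (2 * n)), Tv σ I ∧ S = Wspan Pol p I ∧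
      (∀ j, p j ∈ S ↔ j ∈ I) ∧ ((I.card : ℤ) = k + 1) := by
  classical
  obtain ⟨hdim, I0, hI0⟩ := hS
  set I : Finset (Fin (2 * n)) := (Set.toFinite I0).toFinset with hIdef
  have hIcoe : (↑I : Set (Fin (2 * n))) = I0 := Set.Finite.coe_toFinset _
  have hSW : S = Wspan Pol p I := by
    rw [hI0, Wspan, hIcoe]
  have hTv : Tv σ I := by
    intro i hi hsi
    have h1 : p i ∈ S := by
      rw [hSW]
      exact mem_Wspan_of_mem Pol p hi
    have h2 : p (σ i) ∈ S := by
      rw [hSW]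
      exact mem_Wspan_of_mem Pol p hsi
    have hcol := hdim.1.2 _ h1 _ h2
    exact (hσ i (σ i)).mpr rfl hcol
  refine ⟨I, hTv, hSW, ?_, ?_⟩
  · intro j
    rw [hSW]
    exact mem_Wspan_iff Pol p σ hσ hTv j
  · exact hasDim_card Pol p σ hσ hTv (hSW ▸ hdim) hn

end PolarGeoAux

namespace PolarGeoAux

lemma cCount_arith_main (nz kz mz C μ u t c2 c3 c4 q2 q3 q4 : ℤ)
    (hZ : 2 * C ≤ μ * (2 * nz - u - 1) + q2 * c2 + q3 * c3 + q4 * c4)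
    (hμ : μ = mz + 1)
    (hu : u = 2 * (kz + 1) - μ)
    (hc2 : c2 = (kz + 1) - t) (hc3 : c3 = (kz + 1) - t) (hc4 : c4 = μ)
    (hq2 : q2 = (kz + 1) - μ - t) (hq3 : q3 = (kz + 1) - μ - t)
    (hq4 : q4 = 2 * nz - 4 * (kz + 1) + 2 * μ + 2 * t)
    (ht0 : 0 ≤ t) (hq2nn : 0 ≤ q2) (hq4nn : 0 ≤ q4) (hμμ : 0 ≤ μ * (μ - 1)) :
    C ≤ (mz + 1) * (2 * nz - 2 * kz + mz - 2) + (kz - mz) ^ 2 := by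
  subst hμ hu hc2 hc3 hc4 hq2 hq3 hq4
  have hd0 : 0 ≤ kz - mz := by linarith
  nlinarith [mul_nonneg ht0 hq2nn, mul_nonneg ht0 hd0, hμμ]

lemma cCount_arith_cap (nz kz mz C μ u t c2 c3 c4 q2 q3 q4 : ℤ)
    (hZ : 2 * C ≤ μ * (2 * nz - u - 1) + q2 * c2 + q3 * c3 + q4 * c4)
    (hμ : μ = mz + 1)
    (hu : u = 2 * (kz + 1) - μ)
    (hc2 : c2 = (kz + 1) - t) (hc3 : c3 = (kz + 1) - t) (hc4 : c4 = μ)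
    (hq2 : q2 = (kz + 1) - μ - t) (hq3 : q3 = (kz + 1) - μ - t)
    (hq4 : q4 = 2 * nz - 4 * (kz + 1) + 2 * μ + 2 * t)
    (ht0 : 0 ≤ t) (hq2nn : 0 ≤ q2) (hq4nn : 0 ≤ q4) (hμμ : 0 ≤ μ * (μ - 1))
    (hnk : nz = kz + 2) :
    C ≤ (mz + 1) * (mz + 2) + 1 := by
  subst hμ hu hc2 hc3 hc4 hq2 hq3 hq4 hnk
  have hq2le1 : (kz + 1) - (mz + 1) - t ≤ 1 := by linarith
  nlinarith [mul_nonneg hq2nn (by linarith : (0:ℤ) ≤ 1 - ((kz + 1) - (mz + 1) - t)),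
    hμμ, hq2nn, hq2le1]

end PolarGeoAux


set_option maxHeartbeats 2000000

open PolarGeo
open PolarGeoAux in
/-- Lemma 8 (upper bounds): for distinct `S, U` in a base subset of `G_k`
with `dim (S ∩ U) = m`, one has
`c(S,U) ≤ (m+1)(2n-2k+m-2) + (k-m)²`, and `c(S,U) ≤ (m+1)(m+2) + 1` when
`k = n-2`. -/
theorem cCount_upper_bounds
    {P : Type*} {n : ℕ} (Pol : PolarSpace P n) (hn : 3 ≤ n)
    (hCD : TypeC Pol.lines n ∨ TypeD Pol.lines n)
    (k : ℕ) (hk1 : 1 ≤ k) (hk2 : k ≤ n - 2)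
    (p : Fin (2 * n) → P) (hp : IsBase Pol.lines p)
    (σ : Fin (2 * n) → Fin (2 * n))
    (hσ : ∀ i j, ¬ Col Pol.lines (p i) (p j) ↔ j = σ i)
    (S U : Set P)
    (hS : S ∈ baseSubset Pol.lines p (k : ℤ))
    (hU : U ∈ baseSubset Pol.lines p (k : ℤ))
    (hSU : S ≠ U) (m : ℤ) (hm : HasDim Pol.lines (S ∩ U) m) :
    (cCount Pol.lines p σ (k : ℤ) S U : ℤ) ≤
        (m + 1) * (2 * (n : ℤ) - 2 * (k : ℤ) + m - 2) + ((k : ℤ) - m) ^ 2 ∧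
    (k = n - 2 → (cCount Pol.lines p σ (k : ℤ) S U : ℤ) ≤ (m + 1) * (m + 2) + 1) := by
  classical
  have hn0 : 0 < n := by omega
  obtain ⟨I, hITv, hSW, hImem, hIcard⟩ := key_geom Pol p σ hn0 hσ hS
  obtain ⟨J, hJTv, hUW, hJmem, hJcard⟩ := key_geom Pol p σ hn0 hσ hU
  have σσ : ∀ i, σ (σ i) = i := sigma_invol Pol p σ hσ
  have σinj : Function.Injective σ := sigma_inj Pol p σ hσ
  -- dimension of the intersection
  have hSIUW : S ∩ U = Wspan Pol p (I ∩ J) := by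
    rw [hSW, hUW]; exact Wspan_inter Pol p σ hσ hITv hJTv
  have hIJTv : Tv σ (I ∩ J) := Tv.subset Finset.inter_subset_left hITv
  have hIJcard : (((I ∩ J).card : ℤ)) = m + 1 :=
    hasDim_card Pol p σ hσ hIJTv (hSIUW ▸ hm) hn0
  -- membership bridges
  have hCijS : ∀ i j : Fin (2 * n), S ∈ Cij Pol.lines p σ (k : ℤ) i j ↔
      ((i ∈ I ∧ j ∉ I) ∨ (σ j ∈ I ∧ σ i ∉ I)) := by
    intro i j
    simp only [Cij, plus, minus, Set.mem_union, Set.mem_inter_iff, Set.mem_sep_iff]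
    constructor
    · rintro (⟨⟨_, h1⟩, ⟨_, h2⟩⟩ | ⟨⟨_, h1⟩, ⟨_, h2⟩⟩)
      · exact Or.inl ⟨(hImem i).mp h1, fun hj => h2 ((hImem j).mpr hj)⟩
      · exact Or.inr ⟨(hImem _).mp h1, fun hj => h2 ((hImem _).mpr hj)⟩
    · rintro (⟨h1, h2⟩ | ⟨h1, h2⟩)
      · exact Or.inl ⟨⟨hS, (hImem i).mpr h1⟩, ⟨hS, fun hc => h2 ((hImem j).mp hc)⟩⟩
      · exact Or.inr ⟨⟨hS, (hImem _).mpr h1⟩, ⟨hS, fun hc => h2 ((hImem _).mp hc)⟩⟩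
  have hCijU : ∀ i j : Fin (2 * n), U ∈ Cij Pol.lines p σ (k : ℤ) i j ↔
      ((i ∈ J ∧ j ∉ J) ∨ (σ j ∈ J ∧ σ i ∉ J)) := by
    intro i j
    simp only [Cij, plus, minus, Set.mem_union, Set.mem_inter_iff, Set.mem_sep_iff]
    constructor
    · rintro (⟨⟨_, h1⟩, ⟨_, h2⟩⟩ | ⟨⟨_, h1⟩, ⟨_, h2⟩⟩)
      · exact Or.inl ⟨(hJmem i).mp h1, fun hj => h2 ((hJmem j).mpr hj)⟩
      · exact Or.inr ⟨(hJmem _).mp h1, fun hj => h2 ((hJmem _).mpr hj)⟩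
    · rintro (⟨h1, h2⟩ | ⟨h1, h2⟩)
      · exact Or.inl ⟨⟨hU, (hJmem i).mpr h1⟩, ⟨hU, fun hc => h2 ((hJmem j).mp hc)⟩⟩
      · exact Or.inr ⟨⟨hU, (hJmem _).mpr h1⟩, ⟨hU, fun hc => h2 ((hJmem _).mp hc)⟩⟩
  -- the pair set
  set f : Fin (2 * n) × Fin (2 * n) → Set (Set P) :=
    fun ij => Cij Pol.lines p σ (k : ℤ) ij.1 ij.2 with hf
  set 𝒯 : Finset (Fin (2 * n) × Fin (2 * n)) := Finset.univ.filter
    (fun ij => ij.2 ≠ ij.1 ∧ ij.2 ≠ σ ij.1 ∧ S ∈ f ij ∧ U ∈ f ij) with h𝒯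
  -- step A : cCount ≤ card of image
  have hstepA : cCount Pol.lines p σ (k : ℤ) S U ≤ (𝒯.image f).card := by
    rw [cCount, ← Set.ncard_coe_finset]
    apply Set.ncard_le_ncard _ (Finset.finite_toSet _)
    rintro R ⟨⟨i, j, hji, hjsi, rfl⟩, hSR, hUR⟩
    refine Finset.mem_coe.mpr (Finset.mem_image.mpr ⟨(i, j), ?_, rfl⟩)
    rw [h𝒯, Finset.mem_filter]
    exact ⟨Finset.mem_univ _, hji, hjsi, hSR, hUR⟩
  -- swap symmetry
  have hswap : ∀ ij : Fin (2 * n) × Fin (2 * n), f (σ ij.2, σ ij.1) = f ij := by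
    rintro ⟨i, j⟩
    show Cij Pol.lines p σ (k : ℤ) (σ j) (σ i) = Cij Pol.lines p σ (k : ℤ) i j
    rw [Cij, Cij, σσ, σσ, Set.union_comm]
  -- step B : halving
  have hstepB : 2 * (𝒯.image f).card ≤ 𝒯.card := by
    rw [Finset.card_eq_sum_card_image f 𝒯]
    have hbnd : ∀ a ∈ 𝒯.image f, 2 ≤ (𝒯.filter (fun x => f x = a)).card := by
      intro a ha
      obtain ⟨ij, hij, rfl⟩ := Finset.mem_image.mp ha
      have hij' := Finset.mem_filter.mp (by rwa [h𝒯] at hij)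
      obtain ⟨-, hji, hjsi, hSf, hUf⟩ := hij'
      have hswapmem : (σ ij.2, σ ij.1) ∈ 𝒯 := by
        rw [h𝒯, Finset.mem_filter]
        refine ⟨Finset.mem_univ _, ?_, ?_, ?_, ?_⟩
        · intro h; exact hji (σinj h).symm
        · intro h
          have h2 : σ (σ ij.1) = σ (σ (σ ij.2)) := congrArg σ h
          rw [σσ, σσ] at h2
          exact hjsi (by rw [h2, σσ])
        · rw [hswap]; exact hSf
        · rw [hswap]; exact hUf
      have hnee : ij ≠ (σ ij.2, σ ij.1) := by
        intro h
        exact hjsi (congrArg Prod.snd h)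
      calc 2 = ({ij, (σ ij.2, σ ij.1)} : Finset _).card := (Finset.card_pair hnee).symm
        _ ≤ _ := by
          apply Finset.card_le_card
          intro x hx
          rcases Finset.mem_insert.mp hx with rfl | hx
          · exact Finset.mem_filter.mpr ⟨hij, rfl⟩
          · rw [Finset.mem_singleton] at hx; subst hx
            exact Finset.mem_filter.mpr ⟨hswapmem, hswap ij⟩
    calc 2 * (𝒯.image f).card = (𝒯.image f).card • 2 := by
          rw [smul_eq_mul, mul_comm]
      _ = ∑ _a ∈ 𝒯.image f, 2 := by rw [Finset.sum_const]
      _ ≤ ∑ a ∈ 𝒯.image f, (𝒯.filter (fun x => f x = a)).card := Finset.sum_le_sum hbnd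
  -- index sets
  set I' : Finset (Fin (2 * n)) := I.image σ with hI'
  set J' : Finset (Fin (2 * n)) := J.image σ with hJ'
  have hmemI' : ∀ a, a ∈ I' ↔ σ a ∈ I := by
    intro a
    rw [hI']
    constructor
    · rintro h
      obtain ⟨b, hb, rfl⟩ := Finset.mem_image.mp h
      rwa [σσ]
    · intro h
      exact Finset.mem_image.mpr ⟨σ a, h, σσ a⟩
  have hmemJ' : ∀ a, a ∈ J' ↔ σ a ∈ J := by
    intro a
    rw [hJ']
    constructor
    · rintro h
      obtain ⟨b, hb, rfl⟩ := Finset.mem_image.mp h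
      rwa [σσ]
    · intro h
      exact Finset.mem_image.mpr ⟨σ a, h, σσ a⟩
  have hdisjI : Disjoint I I' := tv_disj_image Pol p σ hσ hITv
  have hdisjJ : Disjoint J J' := tv_disj_image Pol p σ hσ hJTv
  have hI'card : I'.card = I.card := Finset.card_image_of_injective _ σinj
  have hJ'card : J'.card = J.card := Finset.card_image_of_injective _ σinj
  -- semantic conditions for members of 𝒯
  have hTmem : ∀ ij : Fin (2 * n) × Fin (2 * n), ij ∈ 𝒯 →
      ij.2 ≠ ij.1 ∧ ij.2 ≠ σ ij.1 ∧
      ((ij.1 ∈ I ∧ ij.2 ∉ I) ∨ (σ ij.2 ∈ I ∧ σ ij.1 ∉ I)) ∧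
      ((ij.1 ∈ J ∧ ij.2 ∉ J) ∨ (σ ij.2 ∈ J ∧ σ ij.1 ∉ J)) := by
    intro ij hij
    rw [h𝒯, Finset.mem_filter] at hij
    obtain ⟨-, h1, h2, h3, h4⟩ := hij
    exact ⟨h1, h2, (hCijS ij.1 ij.2).mp h3, (hCijU ij.1 ij.2).mp h4⟩
  -- fiber decomposition
  have hfib : 𝒯.card = ∑ i ∈ Finset.univ, (𝒯.filter (fun ij => ij.1 = i)).card :=
    Finset.card_eq_sum_card_fiberwise (fun x _ => Finset.mem_univ x.1)
  -- the four index classes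
  set Q1 : Finset (Fin (2 * n)) := I ∩ J with hQ1
  set Q2 : Finset (Fin (2 * n)) := I \ (J ∪ J') with hQ2
  set Q3 : Finset (Fin (2 * n)) := J \ (I ∪ I') with hQ3
  set Q4 : Finset (Fin (2 * n)) := ((I ∪ I') ∪ (J ∪ J'))ᶜ with hQ4
  set Qun : Finset (Fin (2 * n)) := ((Q1 ∪ Q2) ∪ Q3) ∪ Q4 with hQun
  -- fibers outside Qun are empty
  have hzero : ∀ i : Fin (2 * n), i ∉ Qun → (𝒯.filter (fun ij => ij.1 = i)).card = 0 := by
    intro i hiQ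
    rw [Finset.card_eq_zero, Finset.filter_eq_empty_iff]
    rintro ij hij rfl
    obtain ⟨h1, h2, h3, h4⟩ := hTmem ij hij
    rw [hQun, Finset.mem_union, Finset.mem_union, Finset.mem_union, hQ1, hQ2, hQ3, hQ4] at hiQ
    push_neg at hiQ
    obtain ⟨⟨⟨hq1, hq2⟩, hq3⟩, hq4⟩ := hiQ
    rw [Finset.mem_compl, not_not, Finset.mem_union, Finset.mem_union, Finset.mem_union] at hq4
    have hPSi : ij.1 ∈ I ∨ ij.1 ∉ I' := by
      rcases h3 with ⟨h, _⟩ | ⟨_, h⟩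
      · exact Or.inl h
      · exact Or.inr (fun hc => h ((hmemI' ij.1).mp hc))
    have hPUi : ij.1 ∈ J ∨ ij.1 ∉ J' := by
      rcases h4 with ⟨h, _⟩ | ⟨_, h⟩
      · exact Or.inl h
      · exact Or.inr (fun hc => h ((hmemJ' ij.1).mp hc))
    by_cases hiI : ij.1 ∈ I
    · by_cases hiJ : ij.1 ∈ J
      · exact hq1 (Finset.mem_inter.mpr ⟨hiI, hiJ⟩)
      · rcases hPUi with h | h
        · exact hiJ h
        · apply hq2
          rw [Finset.mem_sdiff, Finset.mem_union]
          exact ⟨hiI, fun hc => hc.elim hiJ h⟩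
    · have hiI' : ij.1 ∉ I' := by
        rcases hPSi with h | h
        · exact absurd h hiI
        · exact h
      by_cases hiJ : ij.1 ∈ J
      · apply hq3
        rw [Finset.mem_sdiff, Finset.mem_union]
        exact ⟨hiJ, fun hc => hc.elim hiI hiI'⟩
      · have hiJ' : ij.1 ∉ J' := by
          rcases hPUi with h | h
          · exact absurd h hiJ
          · exact h
        rcases hq4 with (h | h) | (h | h)
        · exact hiI h
        · exact hiI' h
        · exact hiJ h
        · exact hiJ' h
  -- generic fiber bound
  have hfibsub : ∀ (i : Fin (2 * n)) (W : Finset (Fin (2 * n))),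
      (∀ ij : Fin (2 * n) × Fin (2 * n), ij ∈ 𝒯 → ij.1 = i → ij.2 ∈ W) →
      (𝒯.filter (fun ij => ij.1 = i)).card ≤ W.card := by
    intro i W h
    apply Finset.card_le_card_of_injOn Prod.snd
    · intro ij hij
      have h' := Finset.mem_filter.mp hij
      exact h ij h'.1 h'.2
    · intro a ha b hb hab
      have ha' := (Finset.mem_filter.mp (Finset.mem_coe.mp ha)).2
      have hb' := (Finset.mem_filter.mp (Finset.mem_coe.mp hb)).2
      exact Prod.ext (ha'.trans hb'.symm) hab
  -- bounds on the four classes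
  have hbnd1 : ∀ i ∈ Q1, (𝒯.filter (fun ij => ij.1 = i)).card ≤
      2 * n - ((I ∪ J).card + 1) := by
    intro i hi
    rw [hQ1, Finset.mem_inter] at hi
    have hsiI : σ i ∉ I := hITv i hi.1
    have hsiJ : σ i ∉ J := hJTv i hi.2
    have hW := hfibsub i (insert (σ i) (I ∪ J))ᶜ ?_
    · refine hW.trans (le_of_eq ?_)
      rw [Finset.card_compl, Finset.card_insert_of_notMem
        (by rw [Finset.mem_union]; exact fun hc => hc.elim hsiI hsiJ)]
      simp
    · rintro ij hij rfl
      obtain ⟨h1, h2, h3, h4⟩ := hTmem ij hij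
      rw [Finset.mem_compl, Finset.mem_insert, Finset.mem_union]
      push_neg
      refine ⟨h2, ?_, ?_⟩
      · rcases h3 with ⟨_, h⟩ | ⟨h, _⟩
        · exact h
        · intro hc; exact hITv ij.2 hc h
      · rcases h4 with ⟨_, h⟩ | ⟨h, _⟩
        · exact h
        · intro hc; exact hJTv ij.2 hc h
  have hbnd2 : ∀ i ∈ Q2, (𝒯.filter (fun ij => ij.1 = i)).card ≤ (J' \ I).card := by
    intro i hi
    rw [hQ2, Finset.mem_sdiff, Finset.mem_union] at hi
    push_neg at hi
    obtain ⟨hiI, hiJ, hiJ'⟩ := hi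
    apply hfibsub
    rintro ij hij rfl
    obtain ⟨h1, h2, h3, h4⟩ := hTmem ij hij
    rw [Finset.mem_sdiff]
    constructor
    · rcases h4 with ⟨h, _⟩ | ⟨h, _⟩
      · exact absurd h hiJ
      · exact (hmemJ' ij.2).mpr h
    · rcases h3 with ⟨_, h⟩ | ⟨h, _⟩
      · exact h
      · intro hc; exact hITv ij.2 hc h
  have hbnd3 : ∀ i ∈ Q3, (𝒯.filter (fun ij => ij.1 = i)).card ≤ (I' \ J).card := by
    intro i hi
    rw [hQ3, Finset.mem_sdiff, Finset.mem_union] at hi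
    push_neg at hi
    obtain ⟨hiJ, hiI, hiI'⟩ := hi
    apply hfibsub
    rintro ij hij rfl
    obtain ⟨h1, h2, h3, h4⟩ := hTmem ij hij
    rw [Finset.mem_sdiff]
    constructor
    · rcases h3 with ⟨h, _⟩ | ⟨h, _⟩
      · exact absurd h hiI
      · exact (hmemI' ij.2).mpr h
    · rcases h4 with ⟨_, h⟩ | ⟨h, _⟩
      · exact h
      · intro hc; exact hJTv ij.2 hc h
  have hbnd4 : ∀ i ∈ Q4, (𝒯.filter (fun ij => ij.1 = i)).card ≤ (I' ∩ J').card := by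
    intro i hi
    rw [hQ4, Finset.mem_compl, Finset.mem_union, Finset.mem_union, Finset.mem_union] at hi
    push_neg at hi
    obtain ⟨⟨hiI, hiI'⟩, hiJ, hiJ'⟩ := hi
    apply hfibsub
    rintro ij hij rfl
    obtain ⟨h1, h2, h3, h4⟩ := hTmem ij hij
    rw [Finset.mem_inter]
    constructor
    · rcases h3 with ⟨h, _⟩ | ⟨h, _⟩
      · exact absurd h hiI
      · exact (hmemI' ij.2).mpr h
    · rcases h4 with ⟨h, _⟩ | ⟨h, _⟩
      · exact absurd h hiJ
      · exact (hmemJ' ij.2).mpr h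
  -- disjointness of the classes
  have hd12 : Disjoint Q1 Q2 := by
    rw [Finset.disjoint_left]
    intro a ha hb
    rw [hQ1, Finset.mem_inter] at ha
    rw [hQ2, Finset.mem_sdiff, Finset.mem_union] at hb
    exact hb.2 (Or.inl ha.2)
  have hd13 : Disjoint Q1 Q3 := by
    rw [Finset.disjoint_left]
    intro a ha hb
    rw [hQ1, Finset.mem_inter] at ha
    rw [hQ3, Finset.mem_sdiff, Finset.mem_union] at hb
    exact hb.2 (Or.inl ha.1)
  have hd23 : Disjoint Q2 Q3 := by
    rw [Finset.disjoint_left]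
    intro a ha hb
    rw [hQ2, Finset.mem_sdiff] at ha
    rw [hQ3, Finset.mem_sdiff, Finset.mem_union] at hb
    exact hb.2 (Or.inl ha.1)
  have hd4 : ∀ a ∈ (Q1 ∪ Q2) ∪ Q3, a ∉ Q4 := by
    intro a ha hb
    rw [hQ4, Finset.mem_compl, Finset.mem_union, Finset.mem_union, Finset.mem_union] at hb
    push_neg at hb
    rcases Finset.mem_union.mp ha with h | h
    · rcases Finset.mem_union.mp h with h | h
      · rw [hQ1, Finset.mem_inter] at h; exact hb.1.1 h.1
      · rw [hQ2, Finset.mem_sdiff] at h; exact hb.1.1 h.1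
    · rw [hQ3, Finset.mem_sdiff] at h; exact hb.2.1 h.1
  have hd4' : Disjoint ((Q1 ∪ Q2) ∪ Q3) Q4 := by
    rw [Finset.disjoint_left]; exact hd4
  -- total bound on 𝒯.card
  have hTbound : 𝒯.card ≤ Q1.card * (2 * n - ((I ∪ J).card + 1)) + Q2.card * (J' \ I).card
      + Q3.card * (I' \ J).card + Q4.card * (I' ∩ J').card := by
    rw [hfib]
    have hsub : Qun ⊆ Finset.univ := Finset.subset_univ _
    rw [← Finset.sum_subset hsub (fun x _ hx => hzero x hx)]
    rw [hQun, Finset.sum_union hd4', Finset.sum_union (Finset.disjoint_union_left.mpr ⟨hd13, hd23⟩),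
      Finset.sum_union hd12]
    have e1 : ∑ i ∈ Q1, (𝒯.filter (fun ij => ij.1 = i)).card ≤
        Q1.card * (2 * n - ((I ∪ J).card + 1)) := by
      calc ∑ i ∈ Q1, (𝒯.filter (fun ij => ij.1 = i)).card
          ≤ Q1.card • (2 * n - ((I ∪ J).card + 1)) := Finset.sum_le_card_nsmul _ _ _ hbnd1
        _ = _ := smul_eq_mul ..
    have e2 : ∑ i ∈ Q2, (𝒯.filter (fun ij => ij.1 = i)).card ≤ Q2.card * (J' \ I).card := by
      calc ∑ i ∈ Q2, (𝒯.filter (fun ij => ij.1 = i)).card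
          ≤ Q2.card • (J' \ I).card := Finset.sum_le_card_nsmul _ _ _ hbnd2
        _ = _ := smul_eq_mul ..
    have e3 : ∑ i ∈ Q3, (𝒯.filter (fun ij => ij.1 = i)).card ≤ Q3.card * (I' \ J).card := by
      calc ∑ i ∈ Q3, (𝒯.filter (fun ij => ij.1 = i)).card
          ≤ Q3.card • (I' \ J).card := Finset.sum_le_card_nsmul _ _ _ hbnd3
        _ = _ := smul_eq_mul ..
    have e4 : ∑ i ∈ Q4, (𝒯.filter (fun ij => ij.1 = i)).card ≤ Q4.card * (I' ∩ J').card := by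
      calc ∑ i ∈ Q4, (𝒯.filter (fun ij => ij.1 = i)).card
          ≤ Q4.card • (I' ∩ J').card := Finset.sum_le_card_nsmul _ _ _ hbnd4
        _ = _ := smul_eq_mul ..
    omega
  -- ℕ cardinality identities
  have hIcN : I.card = k + 1 := by exact_mod_cast hIcard
  have hJcN : J.card = k + 1 := by exact_mod_cast hJcard
  have E1 : (I ∪ J).card + (I ∩ J).card = I.card + J.card :=
    Finset.card_union_add_card_inter I J
  have hJ'σ : J'.image σ = J := by
    rw [hJ', Finset.image_image]
    rw [show σ ∘ σ = id from funext σσ]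
    exact Finset.image_id
  have hI'σ : I'.image σ = I := by
    rw [hI', Finset.image_image]
    rw [show σ ∘ σ = id from funext σσ]
    exact Finset.image_id
  have himgJ : (I ∩ J').image σ = I' ∩ J := by
    rw [Finset.image_inter _ _ σinj, hJ'σ, hI']
  have himgIJ : (I ∩ J).image σ = I' ∩ J' := by
    rw [Finset.image_inter _ _ σinj, hI', hJ']
  have hI'Jcard : (I' ∩ J).card = (I ∩ J').card := by
    rw [← himgJ, Finset.card_image_of_injective _ σinj]
  have E4 : (I' ∩ J').card = (I ∩ J).card := by
    rw [← himgIJ, Finset.card_image_of_injective _ σinj]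
  have E2 : (J' \ I).card + (I ∩ J').card = J.card := by
    have h := Finset.card_sdiff_add_card_inter J' I
    rwa [Finset.inter_comm, hJ'card] at h
  have E3 : (I' \ J).card + (I ∩ J').card = I.card := by
    have h := Finset.card_sdiff_add_card_inter I' J
    rwa [hI'Jcard, hI'card] at h
  have hdisjIJJ' : Disjoint (I ∩ J) (I ∩ J') := by
    rw [Finset.disjoint_left]
    intro a ha hb
    exact (Finset.disjoint_left.mp hdisjJ) (Finset.mem_inter.mp ha).2 (Finset.mem_inter.mp hb).2
  have E6 : Q2.card + ((I ∩ J).card + (I ∩ J').card) = I.card := by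
    have h := Finset.card_sdiff_add_card_inter I (J ∪ J')
    rw [Finset.inter_union_distrib_left, Finset.card_union_of_disjoint hdisjIJJ'] at h
    rw [hQ2]
    exact h
  have E7 : Q3.card + ((I ∩ J).card + (I ∩ J').card) = J.card := by
    have h := Finset.card_sdiff_add_card_inter J (I ∪ I')
    have hdisj' : Disjoint (J ∩ I) (J ∩ I') := by
      rw [Finset.disjoint_left]
      intro a ha hb
      exact (Finset.disjoint_left.mp hdisjI) (Finset.mem_inter.mp ha).2 (Finset.mem_inter.mp hb).2
    rw [Finset.inter_union_distrib_left, Finset.card_union_of_disjoint hdisj'] at h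
    rw [Finset.inter_comm J I] at h
    rw [show (J ∩ I').card = (I ∩ J').card by rw [Finset.inter_comm]; exact hI'Jcard] at h
    rw [hQ3]
    exact h
  have E8 : Q4.card + ((I ∪ I') ∪ (J ∪ J')).card = 2 * n := by
    rw [hQ4]
    have h := Finset.card_compl_add_card ((I ∪ I') ∪ (J ∪ J'))
    rwa [Fintype.card_fin] at h
  have E10 : (I ∪ I').card = I.card + I.card := by
    rw [Finset.card_union_of_disjoint hdisjI, hI'card]
  have E10' : (J ∪ J').card = J.card + J.card := by
    rw [Finset.card_union_of_disjoint hdisjJ, hJ'card]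
  have E9 : ((I ∪ I') ∪ (J ∪ J')).card +
      ((I ∩ J).card + (I ∩ J').card + ((I ∩ J').card + (I ∩ J).card)) =
      (I ∪ I').card + (J ∪ J').card := by
    have h := Finset.card_union_add_card_inter (I ∪ I') (J ∪ J')
    have hsplit : (I ∪ I') ∩ (J ∪ J') = (I ∩ J ∪ I ∩ J') ∪ (I' ∩ J ∪ I' ∩ J') := by
      rw [Finset.union_inter_distrib_right, Finset.inter_union_distrib_left,
        Finset.inter_union_distrib_left]
    have hdI' : Disjoint (I' ∩ J) (I' ∩ J') := by
      rw [Finset.disjoint_left]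
      intro a ha hb
      exact (Finset.disjoint_left.mp hdisjJ) (Finset.mem_inter.mp ha).2 (Finset.mem_inter.mp hb).2
    have hdII' : Disjoint (I ∩ J ∪ I ∩ J') (I' ∩ J ∪ I' ∩ J') := by
      rw [Finset.disjoint_left]
      intro a ha hb
      have haI : a ∈ I := by
        rcases Finset.mem_union.mp ha with h' | h'
        · exact (Finset.mem_inter.mp h').1
        · exact (Finset.mem_inter.mp h').1
      have haI' : a ∈ I' := by
        rcases Finset.mem_union.mp hb with h' | h'
        · exact (Finset.mem_inter.mp h').1
        · exact (Finset.mem_inter.mp h').1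
      exact (Finset.disjoint_left.mp hdisjI) haI haI'
    rw [hsplit, Finset.card_union_of_disjoint hdII', Finset.card_union_of_disjoint hdisjIJJ',
      Finset.card_union_of_disjoint hdI'] at h
    rw [show (I' ∩ J).card = (I ∩ J').card from hI'Jcard, E4] at h
    exact h
  -- combine the counting inequalities over ℕ
  have hc1le : (I ∪ J).card + 1 ≤ 2 * n := by
    have : (I ∪ J).card ≤ I.card + J.card := Finset.card_union_le I J
    omega
  have hNat : 2 * cCount Pol.lines p σ (k : ℤ) S U ≤
      Q1.card * (2 * n - ((I ∪ J).card + 1)) + Q2.card * (J' \ I).card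
      + Q3.card * (I' \ J).card + Q4.card * (I' ∩ J').card := by
    have h1 : 2 * cCount Pol.lines p σ (k : ℤ) S U ≤ 𝒯.card :=
      le_trans (by omega) hstepB
    exact le_trans h1 hTbound
  -- cast everything to ℤ
  have hZ : 2 * (cCount Pol.lines p σ (k : ℤ) S U : ℤ) ≤
      ((I ∩ J).card : ℤ) * (2 * (n : ℤ) - ((I ∪ J).card : ℤ) - 1)
      + (Q2.card : ℤ) * ((J' \ I).card : ℤ)
      + (Q3.card : ℤ) * ((I' \ J).card : ℤ)
      + (Q4.card : ℤ) * ((I' ∩ J').card : ℤ) := by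
    have hc1z : ((2 * n - ((I ∪ J).card + 1) : ℕ) : ℤ) =
        2 * (n : ℤ) - ((I ∪ J).card : ℤ) - 1 := by omega
    have hq1z : Q1.card = (I ∩ J).card := by rw [hQ1]
    have h := (Nat.cast_le (α := ℤ)).mpr hNat
    push_cast at h
    rw [hc1z, hq1z] at h
    push_cast at h
    linarith
  have ht0 : (0 : ℤ) ≤ ((I ∩ J').card : ℤ) := Int.natCast_nonneg _
  have hq2nn : (0 : ℤ) ≤ (Q2.card : ℤ) := Int.natCast_nonneg _
  have hq4nn : (0 : ℤ) ≤ (Q4.card : ℤ) := Int.natCast_nonneg _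
  have hu : ((I ∪ J).card : ℤ) = 2 * ((k : ℤ) + 1) - ((I ∩ J).card : ℤ) := by
    have h := (congrArg (Nat.cast (R := ℤ)) E1)
    push_cast at h
    rw [hIcard, hJcard] at h
    linarith
  have hc2z : ((J' \ I).card : ℤ) = ((k : ℤ) + 1) - ((I ∩ J').card : ℤ) := by
    have h := (congrArg (Nat.cast (R := ℤ)) E2)
    push_cast at h
    rw [hJcard] at h
    linarith
  have hc3z : ((I' \ J).card : ℤ) = ((k : ℤ) + 1) - ((I ∩ J').card : ℤ) := by
    have h := (congrArg (Nat.cast (R := ℤ)) E3)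
    push_cast at h
    rw [hIcard] at h
    linarith
  have hc4z : ((I' ∩ J').card : ℤ) = ((I ∩ J).card : ℤ) := by
    exact_mod_cast congrArg (Nat.cast (R := ℤ)) E4
  have hq2z : (Q2.card : ℤ) = ((k : ℤ) + 1) - ((I ∩ J).card : ℤ) - ((I ∩ J').card : ℤ) := by
    have h := (congrArg (Nat.cast (R := ℤ)) E6)
    push_cast at h
    rw [hIcard] at h
    linarith
  have hq3z : (Q3.card : ℤ) = ((k : ℤ) + 1) - ((I ∩ J).card : ℤ) - ((I ∩ J').card : ℤ) := by
    have h := (congrArg (Nat.cast (R := ℤ)) E7)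
    push_cast at h
    rw [hJcard] at h
    linarith
  have hq4z : (Q4.card : ℤ) = 2 * (n : ℤ) - 4 * ((k : ℤ) + 1) + 2 * ((I ∩ J).card : ℤ)
      + 2 * ((I ∩ J').card : ℤ) := by
    have h8 := (congrArg (Nat.cast (R := ℤ)) E8)
    have h9 := (congrArg (Nat.cast (R := ℤ)) E9)
    have h10 := (congrArg (Nat.cast (R := ℤ)) E10)
    have h10' := (congrArg (Nat.cast (R := ℤ)) E10')
    push_cast at h8 h9 h10 h10'
    rw [hIcard] at h10
    rw [hJcard] at h10'
    linarith
  have hμμ : (0 : ℤ) ≤ ((I ∩ J).card : ℤ) * (((I ∩ J).card : ℤ) - 1) := by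
    rcases Nat.eq_zero_or_pos (I ∩ J).card with h0 | h1
    · have h0' : ((I ∩ J).card : ℤ) = 0 := by exact_mod_cast h0
      rw [h0']
      norm_num
    · have h1' : (1 : ℤ) ≤ ((I ∩ J).card : ℤ) := by exact_mod_cast h1
      have := mul_nonneg (by linarith : (0:ℤ) ≤ ((I ∩ J).card : ℤ))
        (by linarith : (0:ℤ) ≤ ((I ∩ J).card : ℤ) - 1)
      exact this
  constructor
  · exact cCount_arith_main (n : ℤ) (k : ℤ) m _ _ _ _ _ _ _ _ _ _ hZ hIJcard hu hc2z hc3z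
      hc4z hq2z hq3z hq4z ht0 hq2nn hq4nn hμμ
  · intro hk
    have hnk : (n : ℤ) = (k : ℤ) + 2 := by
      have h' : n = k + 2 := by omega
      exact_mod_cast h'
    exact cCount_arith_cap (n : ℤ) (k : ℤ) m _ _ _ _ _ _ _ _ _ _ hZ hIJcard hu hc2z hc3z
      hc4z hq2z hq3z hq4z ht0 hq2nn hq4nn hμμ hnk
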